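/- arXiv:1803.03315 — 3 statements merged into one kernel-verified Lean document; each statement's English description precedes it below -/
import Mathlib

section
/- Let B be a quasi-7-bracelet with good partition {A_i}_{i∈ℤ7}, and assume that B is (P_7, C_4, C_5)-free. Then there exists an index i* ∈ ℤ7 such that B is a 7-bracelet with good pair ({A_i}_{i∈ℤ7}, i*). -/
open SimpleGraph

namespace Paper

variable {V : Type*}

/-- `X` is complete to `Y` in `G`. -/
def CompleteTo (G : SimpleGraph V) (X Y : Set V) : Prop :=
  ∀ x ∈ X, ∀ y ∈ Y, G.Adj x y

/-- `X` is anticomplete to `Y` in `G`. -/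
def AnticompleteTo (G : SimpleGraph V) (X Y : Set V) : Prop :=
  ∀ x ∈ X, ∀ y ∈ Y, ¬ G.Adj x y

/-- Closed neighborhood of `v` inside the induced subgraph of `G` on `S`. -/
def cnbr (G : SimpleGraph V) (S : Set V) (v : V) : Set V :=
  {w | w ∈ S ∧ (w = v ∨ G.Adj v w)}

/-- Neighbors of `v` inside the set `X`. -/
def nbrIn (G : SimpleGraph V) (X : Set V) (v : V) : Set V :=
  {w | w ∈ X ∧ G.Adj v w}

/-- `G` is a complete graph. -/
def IsCompleteGraph (G : SimpleGraph V) : Prop :=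
  ∀ u v : V, u ≠ v → G.Adj u v

/-- The induced subgraph of `G` on `S` admits a clique-cutset: a (possibly empty) clique
`C ⊊ S` such that removing `C` from the induced subgraph on `S` disconnects it. -/
def HasCliqueCutsetOn (G : SimpleGraph V) (S : Set V) : Prop :=
  ∃ C : Set V, C ⊆ S ∧ C ≠ S ∧ G.IsClique C ∧ ¬ (G.induce (S \ C)).Connected

def HasCliqueCutset (G : SimpleGraph V) : Prop :=
  HasCliqueCutsetOn G Set.univ

/-- The induced subgraph of `G` on `S` contains an induced copy of `H`. -/
def ContainsInducedOn {W : Type*} (G : SimpleGraph V) (S : Set V) (H : SimpleGraph W) : Prop :=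
  ∃ f : W ↪ V, (∀ a, f a ∈ S) ∧ ∀ a b, G.Adj (f a) (f b) ↔ H.Adj a b

/-- The induced subgraph of `G` on `S` is `H`-free. -/
def FreeOn {W : Type*} (G : SimpleGraph V) (S : Set V) (H : SimpleGraph W) : Prop :=
  ¬ ContainsInducedOn G S H

/-- `G` is `H`-free. -/
def Free {W : Type*} (G : SimpleGraph V) (H : SimpleGraph W) : Prop :=
  FreeOn G Set.univ H

/-- The path on `n` vertices. -/
def pathG (n : ℕ) : SimpleGraph (Fin n) :=
  SimpleGraph.fromRel (fun i j => (i : ℕ) + 1 = (j : ℕ))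

/-- The cycle on `n` vertices. -/
def cycG (n : ℕ) : SimpleGraph (ZMod n) :=
  SimpleGraph.fromRel (fun i j => i + 1 = j)

/-- The graph `Θ₃ʳ`: `r` internally disjoint three-edge paths meeting at their endpoints.
`Sum.inl 0` and `Sum.inl 1` are the two endpoints, and `Sum.inr (i, 0)`, `Sum.inr (i, 1)`
are the internal vertices of the `i`-th path. -/
def thetaG (r : ℕ) : SimpleGraph (Fin 2 ⊕ Fin r × Fin 2) :=
  SimpleGraph.fromRel (fun x y =>
    (∃ i : Fin r, x = Sum.inl 0 ∧ y = Sum.inr (i, 0)) ∨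
    (∃ i : Fin r, x = Sum.inr (i, 0) ∧ y = Sum.inr (i, 1)) ∨
    (∃ i : Fin r, x = Sum.inr (i, 1) ∧ y = Sum.inl 1))

/-- `B` is the vertex set of an anticomponent of `G`. -/
def IsAnticomponent (G : SimpleGraph V) (B : Set V) : Prop :=
  ∃ c : Gᶜ.ConnectedComponent, B = c.supp

/-- `G` has exactly one nontrivial anticomponent, and that anticomponent satisfies `P`. -/
def ExactlyOneNontrivialAnticomponent (G : SimpleGraph V) (P : Set V → Prop) : Prop :=
  ∃ B : Set V, IsAnticomponent G B ∧ B.Nontrivial ∧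
    (∀ B' : Set V, IsAnticomponent G B' → B'.Nontrivial → B' = B) ∧ P B

/-- The stability number of the induced subgraph of `G` on `S`. -/
noncomputable def alphaOn (G : SimpleGraph V) (S : Set V) : ℕ :=
  sSup {n | ∃ T : Finset V, ↑T ⊆ S ∧ (∀ x ∈ T, ∀ y ∈ T, x ≠ y → ¬ G.Adj x y) ∧ T.card = n}

/-- The clique number of `G`. -/
noncomputable def cliqueNumber (G : SimpleGraph V) : ℕ :=
  sSup {n | ∃ T : Finset V, G.IsNClique n T}

/-- A 7-hole in `G`, given by an injective map `x : ZMod 7 → V` whose image induces a `C₇`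
traversed in the order `x 0, x 1, …, x 6, x 0`. -/
def IsHole7 (G : SimpleGraph V) (x : ZMod 7 → V) : Prop :=
  Function.Injective x ∧ ∀ i j, G.Adj (x i) (x j) ↔ (i - j = 1 ∨ j - i = 1)

/-- The set `A_i^*`: vertices of `A i` anticomplete to `A (i-2) ∪ A (i+2)`. -/
def braceletStar (G : SimpleGraph V) (A : ZMod 7 → Set V) (i : ZMod 7) : Set V :=
  {v | v ∈ A i ∧ ∀ w ∈ A (i - 2) ∪ A (i + 2), ¬ G.Adj v w}

/-- The set `A_i^+`: vertices of `A i` anticomplete to `A (i-2)` with a neighbor in `A (i+2)`. -/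
def braceletPlus (G : SimpleGraph V) (A : ZMod 7 → Set V) (i : ZMod 7) : Set V :=
  {v | v ∈ A i ∧ (∀ w ∈ A (i - 2), ¬ G.Adj v w) ∧ ∃ w ∈ A (i + 2), G.Adj v w}

/-- The set `A_i^-`: vertices of `A i` anticomplete to `A (i+2)` with a neighbor in `A (i-2)`. -/
def braceletMinus (G : SimpleGraph V) (A : ZMod 7 → Set V) (i : ZMod 7) : Set V :=
  {v | v ∈ A i ∧ (∀ w ∈ A (i + 2), ¬ G.Adj v w) ∧ ∃ w ∈ A (i - 2), G.Adj v w}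

/-- The induced subgraph of `G` on `S` is a 7-bracelet with good pair `(A, istar)`. -/
def IsGoodPairOn (G : SimpleGraph V) (S : Set V) (A : ZMod 7 → Set V) (istar : ZMod 7) : Prop :=
  -- `A` is a partition of `S`
  (⋃ i, A i) = S ∧
  (∀ i j : ZMod 7, i ≠ j → Disjoint (A i) (A j)) ∧
  -- (I)
  (∀ i, (A i).Nonempty ∧ G.IsClique (A i) ∧
    CompleteTo G (A i) (A (i - 1) ∪ A (i + 1)) ∧
    AnticompleteTo G (A i) (A (i - 3) ∪ A (i + 3))) ∧
  -- (II) (a)-(c): `A i` is partitioned into the canonical sets `A_i^*, A_i^+, A_i^-`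
  (∀ i, A i = braceletStar G A i ∪ braceletPlus G A i ∪ braceletMinus G A i) ∧
  -- (II) (d),(e): closed neighborhoods (in the induced subgraph on `S`) of vertices of
  -- `A_i^+` (resp. `A_i^-`) form a chain under inclusion
  (∀ i, ∀ u ∈ braceletPlus G A i, ∀ v ∈ braceletPlus G A i,
    cnbr G S u ⊆ cnbr G S v ∨ cnbr G S v ⊆ cnbr G S u) ∧
  (∀ i, ∀ u ∈ braceletMinus G A i, ∀ v ∈ braceletMinus G A i,
    cnbr G S u ⊆ cnbr G S v ∨ cnbr G S v ⊆ cnbr G S u) ∧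
  -- (II) (f)
  (∀ i, ∃ v ∈ A i, (∃ w ∈ A (i - 2), ¬ G.Adj v w) ∧ ∃ w ∈ A (i + 2), ¬ G.Adj v w) ∧
  -- (III)
  braceletPlus G A (istar - 3) = ∅ ∧ braceletMinus G A (istar - 3) = ∅ ∧
  braceletPlus G A (istar + 3) = ∅ ∧ braceletMinus G A (istar + 3) = ∅ ∧
  -- (IV)
  braceletMinus G A (istar - 2) = ∅ ∧ braceletPlus G A (istar + 2) = ∅ ∧
  -- (V)
  braceletMinus G A (istar - 1) = ∅ ∧ braceletPlus G A (istar + 1) = ∅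

def IsGoodPartitionOn (G : SimpleGraph V) (S : Set V) (A : ZMod 7 → Set V) : Prop :=
  ∃ istar, IsGoodPairOn G S A istar

/-- The induced subgraph of `G` on `S` is a 7-bracelet. -/
def IsBracelet7On (G : SimpleGraph V) (S : Set V) : Prop :=
  ∃ A istar, IsGoodPairOn G S A istar

/-- The induced subgraph of `G` on `S` is a quasi-7-bracelet with good partition `A`. -/
def IsQuasiGoodPartitionOn (G : SimpleGraph V) (S : Set V) (A : ZMod 7 → Set V) : Prop :=
  (⋃ i, A i) = S ∧
  (∀ i j : ZMod 7, i ≠ j → Disjoint (A i) (A j)) ∧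
  (∀ i, (A i).Nonempty ∧ G.IsClique (A i) ∧
    CompleteTo G (A i) (A (i - 1) ∪ A (i + 1)) ∧
    AnticompleteTo G (A i) (A (i - 3) ∪ A (i + 3))) ∧
  (∀ i, ∃ v ∈ A i, (∃ w ∈ A (i - 2), ¬ G.Adj v w) ∧ ∃ w ∈ A (i + 2), ¬ G.Adj v w)

/-- The induced subgraph of `G` on `S` is a thickened emerald with good triple `(A, C, istar)`.
Here `Em, Ep, Ps, Pm, Ms, Mp` play the roles of
`A_{i*}^-, A_{i*}^+, A_{i*+2}^*, A_{i*+2}^-, A_{i*-2}^*, A_{i*-2}^+`. -/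
def IsGoodTripleTEOn (G : SimpleGraph V) (S : Set V) (A : ZMod 7 → Set V)
    (C : Set V) (istar : ZMod 7) : Prop :=
  (C ∪ ⋃ i, A i) = S ∧
  (∀ i, Disjoint C (A i)) ∧
  (∀ i j : ZMod 7, i ≠ j → Disjoint (A i) (A j)) ∧
  C.Nonempty ∧ G.IsClique C ∧
  (∀ i, (A i).Nonempty ∧ G.IsClique (A i)) ∧
  (∀ i, CompleteTo G (A i) (A (i - 1) ∪ A (i + 1)) ∧
        AnticompleteTo G (A i) (A (i - 3) ∪ A (i + 3))) ∧
  (∀ i, (i = istar - 3 ∨ i = istar - 1 ∨ i = istar + 1 ∨ i = istar + 3) →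
        AnticompleteTo G (A i) (A (i - 2) ∪ A (i + 2))) ∧
  ∃ Em Ep Ps Pm Ms Mp : Set V,
    Em.Nonempty ∧ Ep.Nonempty ∧ Ps.Nonempty ∧ Pm.Nonempty ∧ Ms.Nonempty ∧ Mp.Nonempty ∧
    List.Pairwise (fun X Y : Set V => Disjoint X Y) [Em, Ep, Ps, Pm, Ms, Mp] ∧
    G.IsClique Em ∧ G.IsClique Ep ∧ G.IsClique Ps ∧ G.IsClique Pm ∧
    G.IsClique Ms ∧ G.IsClique Mp ∧
    A istar = Em ∪ Ep ∧
    A (istar + 2) = Ps ∪ Pm ∧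
    A (istar - 2) = Ms ∪ Mp ∧
    CompleteTo G Em Mp ∧ AnticompleteTo G Em (Ms ∪ A (istar + 2)) ∧
    CompleteTo G Ep Pm ∧ AnticompleteTo G Ep (Ps ∪ A (istar - 2)) ∧
    CompleteTo G C (Ps ∪ A (istar + 3) ∪ A (istar - 3) ∪ Ms) ∧
    AnticompleteTo G C (Mp ∪ A (istar - 1) ∪ A istar ∪ A (istar + 1) ∪ Pm)

/-- The induced subgraph of `G` on `S` is a thickened emerald. -/
def IsThickenedEmeraldOn (G : SimpleGraph V) (S : Set V) : Prop :=
  ∃ A C istar, IsGoodTripleTEOn G S A C istar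

/-- The neighborhoods in `Y` of the vertices of `X` form a chain under inclusion whose
largest element is all of `Y`: this encodes "`X` can be ordered as `x_1, …, x_t` so that
`N[x_t] ∩ Y ⊆ ⋯ ⊆ N[x_1] ∩ Y = Y`". -/
def ChainedPairTo (G : SimpleGraph V) (X Y : Set V) : Prop :=
  (∀ u ∈ X, ∀ v ∈ X, nbrIn G Y u ⊆ nbrIn G Y v ∨ nbrIn G Y v ⊆ nbrIn G Y u) ∧
  (∃ u ∈ X, ∀ y ∈ Y, G.Adj u y)

/-- The induced subgraph of `G` on `S` is an `r`-lantern with good partition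
`(A, Bs 0, …, Bs (r-1), Cs 0, …, Cs (r-1), D)`, where the index `0 : Fin r` plays the role
of the index `1` of the paper. -/
def IsLanternPartitionOn (G : SimpleGraph V) (S : Set V) (r : ℕ)
    (A D : Set V) (Bs Cs : Fin r → Set V) : Prop :=
  (A ∪ D ∪ (⋃ i, Bs i) ∪ (⋃ i, Cs i)) = S ∧
  Disjoint A D ∧
  (∀ i, Disjoint A (Bs i) ∧ Disjoint A (Cs i) ∧ Disjoint D (Bs i) ∧ Disjoint D (Cs i)) ∧
  (∀ i j, Disjoint (Bs i) (Cs j)) ∧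
  (∀ i j, i ≠ j → Disjoint (Bs i) (Bs j) ∧ Disjoint (Cs i) (Cs j)) ∧
  A.Nonempty ∧ D.Nonempty ∧ (∀ i, (Bs i).Nonempty ∧ (Cs i).Nonempty) ∧
  G.IsClique A ∧ G.IsClique D ∧ (∀ i, G.IsClique (Bs i) ∧ G.IsClique (Cs i)) ∧
  AnticompleteTo G A D ∧
  (∀ i, CompleteTo G A (Bs i) ∧ AnticompleteTo G A (Cs i)) ∧
  (∀ i, CompleteTo G D (Cs i) ∧ AnticompleteTo G D (Bs i)) ∧
  (∀ i : Fin r, i.val = 0 → ChainedPairTo G (Bs i) (Cs i) ∧ ChainedPairTo G (Cs i) (Bs i)) ∧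
  (∀ i : Fin r, i.val ≠ 0 → CompleteTo G (Bs i) (Cs i)) ∧
  (∀ i j, i ≠ j → AnticompleteTo G (Bs i ∪ Cs i) (Bs j ∪ Cs j))

/-- The induced subgraph of `G` on `S` is a lantern. -/
def IsLanternOn (G : SimpleGraph V) (S : Set V) : Prop :=
  ∃ r : ℕ, 3 ≤ r ∧ ∃ (A D : Set V) (Bs Cs : Fin r → Set V),
    IsLanternPartitionOn G S r A D Bs Cs

/-- The induced subgraph of `G` on `S` is a thickened `Θ₃ʳ` with good partition
`(A, Bs, Cs, D)`. -/
def IsThickThetaPartitionOn (G : SimpleGraph V) (S : Set V) (r : ℕ)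
    (A D : Set V) (Bs Cs : Fin r → Set V) : Prop :=
  (A ∪ D ∪ (⋃ i, Bs i) ∪ (⋃ i, Cs i)) = S ∧
  Disjoint A D ∧
  (∀ i, Disjoint A (Bs i) ∧ Disjoint A (Cs i) ∧ Disjoint D (Bs i) ∧ Disjoint D (Cs i)) ∧
  (∀ i j, Disjoint (Bs i) (Cs j)) ∧
  (∀ i j, i ≠ j → Disjoint (Bs i) (Bs j) ∧ Disjoint (Cs i) (Cs j)) ∧
  A.Nonempty ∧ D.Nonempty ∧ (∀ i, (Bs i).Nonempty ∧ (Cs i).Nonempty) ∧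
  G.IsClique A ∧ G.IsClique D ∧ (∀ i, G.IsClique (Bs i) ∧ G.IsClique (Cs i)) ∧
  AnticompleteTo G A D ∧
  (∀ i, CompleteTo G A (Bs i) ∧ AnticompleteTo G A (Cs i)) ∧
  (∀ i, CompleteTo G D (Cs i) ∧ AnticompleteTo G D (Bs i)) ∧
  (∀ i, CompleteTo G (Bs i) (Cs i)) ∧
  (∀ i j, i ≠ j → AnticompleteTo G (Bs i ∪ Cs i) (Bs j ∪ Cs j))

/-- The induced subgraph of `G` on `S` is a `k`-ring with partition `X`. -/
def IsRingPartitionOn (G : SimpleGraph V) (S : Set V) (k : ℕ) (X : ZMod k → Set V) : Prop :=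
  (⋃ i, X i) = S ∧
  (∀ i j : ZMod k, i ≠ j → Disjoint (X i) (X j)) ∧
  (∀ i, (X i).Nonempty) ∧
  (∀ i, ∀ u ∈ X i, X i ⊆ cnbr G S u) ∧
  (∀ i, ∀ u ∈ X i, cnbr G S u ⊆ X (i - 1) ∪ X i ∪ X (i + 1)) ∧
  (∀ i, ∃ u ∈ X i, cnbr G S u = X (i - 1) ∪ X i ∪ X (i + 1)) ∧
  (∀ i, ∀ u ∈ X i, ∀ v ∈ X i, cnbr G S u ⊆ cnbr G S v ∨ cnbr G S v ⊆ cnbr G S u)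

/-- The induced subgraph of `G` on `S` is a ring (of some length `k ≥ 4`). -/
def IsRingOn (G : SimpleGraph V) (S : Set V) : Prop :=
  ∃ k : ℕ, 4 ≤ k ∧ ∃ X : ZMod k → Set V, IsRingPartitionOn G S k X

/-- The induced subgraph of `G` on `S` is a 6-ring. -/
def IsRing6On (G : SimpleGraph V) (S : Set V) : Prop :=
  ∃ X : ZMod 6 → Set V, IsRingPartitionOn G S 6 X

/-- The induced subgraph of `G` on `S` is a 6-wreath. -/
def IsWreath6On (G : SimpleGraph V) (S : Set V) : Prop :=
  ∃ X : ZMod 6 → Set V, IsRingPartitionOn G S 6 X ∧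
    CompleteTo G (X 0) (X 1) ∧ CompleteTo G (X 2) (X 3) ∧ CompleteTo G (X 4) (X 5)

/-- The induced subgraph of `G` on `S` is a 6-crown with good triple `(C, D, istar)`. -/
def IsCrownTripleOn (G : SimpleGraph V) (S : Set V) (C D : ZMod 6 → Set V)
    (istar : ZMod 6) : Prop :=
  ((⋃ i, C i) ∪ (⋃ i, D i)) = S ∧
  (∀ i j : ZMod 6, i ≠ j → Disjoint (C i) (C j) ∧ Disjoint (D i) (D j)) ∧
  (∀ i j : ZMod 6, Disjoint (C i) (D j)) ∧
  (∀ i, G.IsClique (C i) ∧ G.IsClique (D i)) ∧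
  (∀ i, (C i).Nonempty) ∧
  D (istar - 2) = ∅ ∧ D (istar - 1) = ∅ ∧
  (D (istar + 1)).Nonempty ∧ (D (istar + 2)).Nonempty ∧ (D (istar + 3)).Nonempty ∧
  (∀ i, CompleteTo G (C i) (C (i - 1) ∪ C (i + 1)) ∧
        AnticompleteTo G (C i) (C (i + 2) ∪ C (i + 3) ∪ C (i + 4))) ∧
  (∀ i, CompleteTo G (D i) (C (i - 1) ∪ C i ∪ C (i + 1)) ∧
        AnticompleteTo G (D i) (C (i + 2) ∪ C (i + 3) ∪ C (i + 4))) ∧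
  (∀ i j : ZMod 6, i ≠ j → AnticompleteTo G (D i) (D j))

/-- The induced subgraph of `G` on `S` is a 6-crown. -/
def IsCrown6On (G : SimpleGraph V) (S : Set V) : Prop :=
  ∃ C D istar, IsCrownTripleOn G S C D istar

/-- The set `X`: vertices outside `S` mixed on `S`. -/
def setX (G : SimpleGraph V) (S : Set V) : Set V :=
  {v | v ∉ S ∧ (∃ w ∈ S, G.Adj v w) ∧ ∃ w ∈ S, ¬ G.Adj v w}

/-- The set `L_A`: vertices of `X` with a neighbor in `A`, anticomplete to `S \ A`. -/
def setL (G : SimpleGraph V) (S A : Set V) : Set V :=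
  {v | v ∈ setX G S ∧ (∃ w ∈ A, G.Adj v w) ∧ ∀ w ∈ S \ A, ¬ G.Adj v w}

/-- The set `T_{B_i}` (for `A := A`, `Bi := B_i`, `Ci := C_i`): vertices of `X` complete to
`A ∪ B_i`, mixed on `C_i`, anticomplete to `S \ (A ∪ B_i ∪ C_i)`. -/
def setT (G : SimpleGraph V) (S A Bi Ci : Set V) : Set V :=
  {v | v ∈ setX G S ∧ (∀ w ∈ A ∪ Bi, G.Adj v w) ∧
       (∃ w ∈ Ci, G.Adj v w) ∧ (∃ w ∈ Ci, ¬ G.Adj v w) ∧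
       ∀ w ∈ S \ (A ∪ Bi ∪ Ci), ¬ G.Adj v w}

/-- The set `R_{B_i}`: vertices of `X` complete to `A`, with a neighbor in `B_i`,
anticomplete to `S \ (A ∪ B_i)`. -/
def setR (G : SimpleGraph V) (S A Bi : Set V) : Set V :=
  {v | v ∈ setX G S ∧ (∀ w ∈ A, G.Adj v w) ∧ (∃ w ∈ Bi, G.Adj v w) ∧
       ∀ w ∈ S \ (A ∪ Bi), ¬ G.Adj v w}

end Paper

open Paper

section AuxStatement11

variable {V : Type*} {B : SimpleGraph V}

lemma noC4' (h4 : Paper.Free B (cycG 4)) {a b c d : V}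
    (hab : B.Adj a b) (hbc : B.Adj b c) (hcd : B.Adj c d) (hda : B.Adj d a)
    (hac : ¬ B.Adj a c) (hbd : ¬ B.Adj b d) (hac' : a ≠ c) (hbd' : b ≠ d) : False := by
  apply h4
  have hall : ∀ k : ZMod 4, k = 0 ∨ k = 1 ∨ k = 2 ∨ k = 3 := by decide
  refine ⟨⟨fun i : ZMod 4 => if i = 0 then a else if i = 1 then b else if i = 2 then c else d, ?_⟩,
    fun _ => Set.mem_univ _, ?_⟩
  · intro i j h
    rcases hall i with rfl|rfl|rfl|rfl <;> rcases hall j with rfl|rfl|rfl|rfl <;>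
      first
        | rfl
        | exact absurd h hab.ne | exact absurd h hab.ne'
        | exact absurd h hbc.ne | exact absurd h hbc.ne'
        | exact absurd h hcd.ne | exact absurd h hcd.ne'
        | exact absurd h hda.ne | exact absurd h hda.ne'
        | exact absurd h hac' | exact absurd h hac'.symm
        | exact absurd h hbd' | exact absurd h hbd'.symm
  · intro i j
    rcases hall i with rfl|rfl|rfl|rfl <;> rcases hall j with rfl|rfl|rfl|rfl <;>
      first
        | exact iff_of_true hab (by simp only [cycG, SimpleGraph.fromRel_adj]; decide)
        | exact iff_of_true hab.symm (by simp only [cycG, SimpleGraph.fromRel_adj]; decide)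
        | exact iff_of_true hbc (by simp only [cycG, SimpleGraph.fromRel_adj]; decide)
        | exact iff_of_true hbc.symm (by simp only [cycG, SimpleGraph.fromRel_adj]; decide)
        | exact iff_of_true hcd (by simp only [cycG, SimpleGraph.fromRel_adj]; decide)
        | exact iff_of_true hcd.symm (by simp only [cycG, SimpleGraph.fromRel_adj]; decide)
        | exact iff_of_true hda (by simp only [cycG, SimpleGraph.fromRel_adj]; decide)
        | exact iff_of_true hda.symm (by simp only [cycG, SimpleGraph.fromRel_adj]; decide)
        | exact iff_of_false (B.irrefl) (by simp only [cycG, SimpleGraph.fromRel_adj]; decide)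
        | exact iff_of_false hac (by simp only [cycG, SimpleGraph.fromRel_adj]; decide)
        | exact iff_of_false (fun h => hac h.symm) (by simp only [cycG, SimpleGraph.fromRel_adj]; decide)
        | exact iff_of_false hbd (by simp only [cycG, SimpleGraph.fromRel_adj]; decide)
        | exact iff_of_false (fun h => hbd h.symm) (by simp only [cycG, SimpleGraph.fromRel_adj]; decide)

lemma noC5' (h5 : Paper.Free B (cycG 5)) {a b c d e : V}
    (hab : B.Adj a b) (hbc : B.Adj b c) (hcd : B.Adj c d) (hde : B.Adj d e) (hea : B.Adj e a)
    (hac : ¬ B.Adj a c) (had : ¬ B.Adj a d) (hbd : ¬ B.Adj b d) (hbe : ¬ B.Adj b e)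
    (hce : ¬ B.Adj c e)
    (hac' : a ≠ c) (had' : a ≠ d) (hbd' : b ≠ d) (hbe' : b ≠ e) (hce' : c ≠ e) : False := by
  apply h5
  have hall : ∀ k : ZMod 5, k = 0 ∨ k = 1 ∨ k = 2 ∨ k = 3 ∨ k = 4 := by decide
  refine ⟨⟨fun i : ZMod 5 =>
      if i = 0 then a else if i = 1 then b else if i = 2 then c else if i = 3 then d else e, ?_⟩,
    fun _ => Set.mem_univ _, ?_⟩
  · intro i j h
    rcases hall i with rfl|rfl|rfl|rfl|rfl <;> rcases hall j with rfl|rfl|rfl|rfl|rfl <;>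
      first
        | rfl
        | exact absurd h hab.ne | exact absurd h hab.ne'
        | exact absurd h hbc.ne | exact absurd h hbc.ne'
        | exact absurd h hcd.ne | exact absurd h hcd.ne'
        | exact absurd h hde.ne | exact absurd h hde.ne'
        | exact absurd h hea.ne | exact absurd h hea.ne'
        | exact absurd h hac' | exact absurd h hac'.symm
        | exact absurd h had' | exact absurd h had'.symm
        | exact absurd h hbd' | exact absurd h hbd'.symm
        | exact absurd h hbe' | exact absurd h hbe'.symm
        | exact absurd h hce' | exact absurd h hce'.symm
  · intro i j
    rcases hall i with rfl|rfl|rfl|rfl|rfl <;> rcases hall j with rfl|rfl|rfl|rfl|rfl <;>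
      first
        | exact iff_of_true hab (by simp only [cycG, SimpleGraph.fromRel_adj]; decide)
        | exact iff_of_true hab.symm (by simp only [cycG, SimpleGraph.fromRel_adj]; decide)
        | exact iff_of_true hbc (by simp only [cycG, SimpleGraph.fromRel_adj]; decide)
        | exact iff_of_true hbc.symm (by simp only [cycG, SimpleGraph.fromRel_adj]; decide)
        | exact iff_of_true hcd (by simp only [cycG, SimpleGraph.fromRel_adj]; decide)
        | exact iff_of_true hcd.symm (by simp only [cycG, SimpleGraph.fromRel_adj]; decide)
        | exact iff_of_true hde (by simp only [cycG, SimpleGraph.fromRel_adj]; decide)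
        | exact iff_of_true hde.symm (by simp only [cycG, SimpleGraph.fromRel_adj]; decide)
        | exact iff_of_true hea (by simp only [cycG, SimpleGraph.fromRel_adj]; decide)
        | exact iff_of_true hea.symm (by simp only [cycG, SimpleGraph.fromRel_adj]; decide)
        | exact iff_of_false (B.irrefl) (by simp only [cycG, SimpleGraph.fromRel_adj]; decide)
        | exact iff_of_false hac (by simp only [cycG, SimpleGraph.fromRel_adj]; decide)
        | exact iff_of_false (fun h => hac h.symm) (by simp only [cycG, SimpleGraph.fromRel_adj]; decide)
        | exact iff_of_false had (by simp only [cycG, SimpleGraph.fromRel_adj]; decide)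
        | exact iff_of_false (fun h => had h.symm) (by simp only [cycG, SimpleGraph.fromRel_adj]; decide)
        | exact iff_of_false hbd (by simp only [cycG, SimpleGraph.fromRel_adj]; decide)
        | exact iff_of_false (fun h => hbd h.symm) (by simp only [cycG, SimpleGraph.fromRel_adj]; decide)
        | exact iff_of_false hbe (by simp only [cycG, SimpleGraph.fromRel_adj]; decide)
        | exact iff_of_false (fun h => hbe h.symm) (by simp only [cycG, SimpleGraph.fromRel_adj]; decide)
        | exact iff_of_false hce (by simp only [cycG, SimpleGraph.fromRel_adj]; decide)
        | exact iff_of_false (fun h => hce h.symm) (by simp only [cycG, SimpleGraph.fromRel_adj]; decide)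

set_option maxRecDepth 4000 in
lemma comb7 : ∀ f : ZMod 7 → Bool, (∀ i, ¬(f i = true ∧ f (i + 3) = true)) →
    ∃ t : ZMod 7, f (t + 1) = false ∧ f (t + 2) = false ∧ f (t + 3) = false ∧ f (t + 4) = false := by
  decide

end AuxStatement11


theorem statement_11 {V : Type*} [Fintype V] (B : SimpleGraph V) (A : ZMod 7 → Set V)
    (hq : IsQuasiGoodPartitionOn B Set.univ A)
    (h7 : Paper.Free B (pathG 7)) (h4 : Paper.Free B (cycG 4)) (h5 : Paper.Free B (cycG 5)) :
    ∃ istar : ZMod 7, IsGoodPairOn B Set.univ A istar := by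
  classical
  obtain ⟨hU, hdisj, hI, hf⟩ := hq
  have hne : ∀ i, (A i).Nonempty := fun i => (hI i).1
  have hclq : ∀ i, B.IsClique (A i) := fun i => (hI i).2.1
  have hcompl : ∀ i, CompleteTo B (A i) (A (i - 1) ∪ A (i + 1)) := fun i => (hI i).2.2.1
  have hanti : ∀ i, AnticompleteTo B (A i) (A (i - 3) ∪ A (i + 3)) := fun i => (hI i).2.2.2
  have hAc : ∀ {w : V} (j k : ZMod 7), j = k → w ∈ A j → w ∈ A k := fun j k h hw => h ▸ hw
  have hdne : ∀ (i j : ZMod 7), i ≠ j → ∀ v ∈ A i, ∀ w ∈ A j, v ≠ w := by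
    intro i j hij v hv w hw hvw
    exact Set.disjoint_left.1 (hdisj i j hij) hv (hvw ▸ hw)
  have adjP : ∀ i : ZMod 7, ∀ v ∈ A i, ∀ w ∈ A (i + 1), B.Adj v w :=
    fun i v hv w hw => hcompl i v hv w (Or.inr hw)
  have nadjP3 : ∀ i : ZMod 7, ∀ v ∈ A i, ∀ w ∈ A (i + 3), ¬ B.Adj v w :=
    fun i v hv w hw => hanti i v hv w (Or.inr hw)
  have nadjP4 : ∀ i : ZMod 7, ∀ v ∈ A i, ∀ w ∈ A (i + 4), ¬ B.Adj v w :=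
    fun i v hv w hw => hanti i v hv w
      (Or.inl (hAc _ _ ((by decide : ∀ i : ZMod 7, i + 4 = i - 3) i) hw))
  -- Claim 1: no vertex has neighbors on both sides at distance 2
  have claim1 : ∀ i : ZMod 7, ∀ v ∈ A i, ∀ u ∈ A (i + 5), ∀ w ∈ A (i + 2),
      B.Adj v u → B.Adj v w → False := by
    intro i v hv u hu w hw hvu hvw
    obtain ⟨x, hx⟩ := hne (i + 3)
    obtain ⟨y, hy⟩ := hne (i + 4)
    have hwx : B.Adj w x := adjP (i + 2) w hw x (hAc _ _ (by ring) hx)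
    have hxy : B.Adj x y := adjP (i + 3) x hx y (hAc _ _ (by ring) hy)
    have hyu : B.Adj y u := adjP (i + 4) y hy u (hAc _ _ (by ring) hu)
    have hvx : ¬ B.Adj v x := nadjP3 i v hv x hx
    have hvy : ¬ B.Adj v y := nadjP4 i v hv y hy
    have huw : ¬ B.Adj u w := nadjP4 (i + 5) u hu w
      (hAc _ _ ((by decide : ∀ i : ZMod 7, i + 2 = i + 5 + 4) i) hw)
    by_cases hxu : B.Adj x u
    · exact noC4' h4 hvw hwx hxu hvu.symm hvx (fun h => huw h.symm)
        (hdne i (i + 3) ((by decide : ∀ i : ZMod 7, i ≠ i + 3) i) v hv x hx)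
        (hdne (i + 2) (i + 5) ((by decide : ∀ i : ZMod 7, i + 2 ≠ i + 5) i) w hw u hu)
    by_cases hyw : B.Adj y w
    · exact noC4' h4 hvu hyu.symm hyw hvw.symm hvy huw
        (hdne i (i + 4) ((by decide : ∀ i : ZMod 7, i ≠ i + 4) i) v hv y hy)
        (hdne (i + 5) (i + 2) ((by decide : ∀ i : ZMod 7, i + 5 ≠ i + 2) i) u hu w hw)
    · exact noC5' h5 hvw hwx hxy hyu hvu.symm hvx hvy (fun h => hyw h.symm)
        (fun h => huw h.symm) hxu
        (hdne i (i + 3) ((by decide : ∀ i : ZMod 7, i ≠ i + 3) i) v hv x hx)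
        (hdne i (i + 4) ((by decide : ∀ i : ZMod 7, i ≠ i + 4) i) v hv y hy)
        (hdne (i + 2) (i + 4) ((by decide : ∀ i : ZMod 7, i + 2 ≠ i + 4) i) w hw y hy)
        (hdne (i + 2) (i + 5) ((by decide : ∀ i : ZMod 7, i + 2 ≠ i + 5) i) w hw u hu)
        (hdne (i + 3) (i + 5) ((by decide : ∀ i : ZMod 7, i + 3 ≠ i + 5) i) x hx u hu)
  -- E i : there is an edge between A i and A (i+2)
  set E : ZMod 7 → Prop := fun j => ∃ u ∈ A j, ∃ w ∈ A (j + 2), B.Adj u w with hEdef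
  -- Claim 3: no edges between classes at "distance 3" configurations
  have claim3 : ∀ i : ZMod 7, E i → E (i + 3) → False := by
    intro i hEi hEi3
    obtain ⟨u, hu, w, hw, huw⟩ := hEi
    obtain ⟨p, hp, q, hq0, hpq⟩ := hEi3
    have hq : q ∈ A (i + 5) := hAc _ _ (by ring) hq0
    obtain ⟨b, hb⟩ := hne (i + 6)
    have hwp : B.Adj w p := adjP (i + 2) w hw p (hAc _ _ (by ring) hp)
    have hqb : B.Adj q b := adjP (i + 5) q hq b (hAc _ _ (by ring) hb)
    have hbu : B.Adj b u := adjP (i + 6) b hb u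
      (hAc _ _ ((by decide : ∀ i : ZMod 7, i = i + 6 + 1) i) hu)
    have hup : ¬ B.Adj u p := nadjP3 i u hu p hp
    have huq : ¬ B.Adj u q := fun h => claim1 i u hu q hq w hw h huw
    have hwq : ¬ B.Adj w q := nadjP3 (i + 2) w hw q
      (hAc _ _ ((by decide : ∀ i : ZMod 7, i + 5 = i + 2 + 3) i) hq)
    have hwb : ¬ B.Adj w b := nadjP4 (i + 2) w hw b
      (hAc _ _ ((by decide : ∀ i : ZMod 7, i + 6 = i + 2 + 4) i) hb)
    have hpb : ¬ B.Adj p b := nadjP3 (i + 3) p hp b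
      (hAc _ _ ((by decide : ∀ i : ZMod 7, i + 6 = i + 3 + 3) i) hb)
    exact noC5' h5 huw hwp hpq hqb hbu hup huq hwq hwb hpb
      (hdne i (i + 3) ((by decide : ∀ i : ZMod 7, i ≠ i + 3) i) u hu p hp)
      (hdne i (i + 5) ((by decide : ∀ i : ZMod 7, i ≠ i + 5) i) u hu q hq)
      (hdne (i + 2) (i + 5) ((by decide : ∀ i : ZMod 7, i + 2 ≠ i + 5) i) w hw q hq)
      (hdne (i + 2) (i + 6) ((by decide : ∀ i : ZMod 7, i + 2 ≠ i + 6) i) w hw b hb)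
      (hdne (i + 3) (i + 6) ((by decide : ∀ i : ZMod 7, i + 3 ≠ i + 6) i) p hp b hb)
  -- (II)(a)-(c): the canonical partition of each A i
  have hpart : ∀ i, A i = braceletStar B A i ∪ braceletPlus B A i ∪ braceletMinus B A i := by
    intro i
    ext v
    constructor
    · intro hv
      by_cases hm : ∃ w ∈ A (i - 2), B.Adj v w
      · obtain ⟨w, hw, hvw⟩ := hm
        have hw5 : w ∈ A (i + 5) := hAc _ _ ((by decide : ∀ i : ZMod 7, i - 2 = i + 5) i) hw
        exact Or.inr ⟨hv, fun w' hw' hvw' => claim1 i v hv w hw5 w' hw' hvw hvw', w, hw, hvw⟩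
      · by_cases hp : ∃ w ∈ A (i + 2), B.Adj v w
        · exact Or.inl (Or.inr ⟨hv, fun w hw hvw => hm ⟨w, hw, hvw⟩, hp⟩)
        · refine Or.inl (Or.inl ⟨hv, fun w hw => ?_⟩)
          rcases hw with h | h
          · exact fun a => hm ⟨w, h, a⟩
          · exact fun a => hp ⟨w, h, a⟩
    · rintro ((h | h) | h) <;> exact h.1
  -- chain conditions
  have hchainP : ∀ i, ∀ u ∈ braceletPlus B A i, ∀ v ∈ braceletPlus B A i,
      cnbr B Set.univ u ⊆ cnbr B Set.univ v ∨ cnbr B Set.univ v ⊆ cnbr B Set.univ u := by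
    intro i u hu v hv
    by_cases huv : u = v
    · subst huv; exact Or.inl subset_rfl
    by_contra hcon
    push_neg at hcon
    obtain ⟨hnuv, hnvu⟩ := hcon
    rw [Set.not_subset] at hnuv hnvu
    obtain ⟨p, hp1, hp2⟩ := hnuv
    obtain ⟨q, hq1, hq2⟩ := hnvu
    obtain ⟨humem, hplusU, -⟩ := hu
    obtain ⟨hvmem, hplusV, -⟩ := hv
    have hadjuv : B.Adj u v := hclq i humem hvmem huv
    have hp2' : ¬ (p = v ∨ B.Adj v p) := fun h => hp2 ⟨Set.mem_univ p, h⟩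
    push_neg at hp2'
    obtain ⟨hpv, hpnadj⟩ := hp2'
    have hup : B.Adj u p := by
      rcases hp1.2 with rfl | h
      · exact (hpnadj hadjuv.symm).elim
      · exact h
    have hq2' : ¬ (q = u ∨ B.Adj u q) := fun h => hq2 ⟨Set.mem_univ q, h⟩
    push_neg at hq2'
    obtain ⟨hqu, hqnadj⟩ := hq2'
    have hvq : B.Adj v q := by
      rcases hq1.2 with rfl | h
      · exact (hqnadj hadjuv).elim
      · exact h
    have hcase7 : ∀ d : ZMod 7, d = 0 ∨ d = 1 ∨ d = 2 ∨ d = 3 ∨ d = 4 ∨ d = 5 ∨ d = 6 := by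
      decide
    have hpA2 : p ∈ A (i + 2) := by
      obtain ⟨k, hk⟩ := Set.mem_iUnion.1 (show p ∈ ⋃ j, A j by rw [hU]; trivial)
      have hkeq : k = i + (k - i) := by ring
      rcases hcase7 (k - i) with h|h|h|h|h|h|h <;> rw [h] at hkeq <;> rw [hkeq] at hk
      · exact absurd (hclq i hvmem (hAc _ _ (by ring) hk) (Ne.symm hpv)) hpnadj
      · exact absurd (hcompl i v hvmem p (Or.inr hk)) hpnadj
      · exact hk
      · exact absurd hup (nadjP3 i u humem p hk)
      · exact absurd hup (nadjP4 i u humem p hk)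
      · exact absurd hup (hplusU p (hAc _ _ ((by decide : ∀ i : ZMod 7, i + 5 = i - 2) i) hk))
      · exact absurd (hcompl i v hvmem p
          (Or.inl (hAc _ _ ((by decide : ∀ i : ZMod 7, i + 6 = i - 1) i) hk))) hpnadj
    have hqA2 : q ∈ A (i + 2) := by
      obtain ⟨k, hk⟩ := Set.mem_iUnion.1 (show q ∈ ⋃ j, A j by rw [hU]; trivial)
      have hkeq : k = i + (k - i) := by ring
      rcases hcase7 (k - i) with h|h|h|h|h|h|h <;> rw [h] at hkeq <;> rw [hkeq] at hk
      · exact absurd (hclq i humem (hAc _ _ (by ring) hk) (Ne.symm hqu)) hqnadj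
      · exact absurd (hcompl i u humem q (Or.inr hk)) hqnadj
      · exact hk
      · exact absurd hvq (nadjP3 i v hvmem q hk)
      · exact absurd hvq (nadjP4 i v hvmem q hk)
      · exact absurd hvq (hplusV q (hAc _ _ ((by decide : ∀ i : ZMod 7, i + 5 = i - 2) i) hk))
      · exact absurd (hcompl i u humem q
          (Or.inl (hAc _ _ ((by decide : ∀ i : ZMod 7, i + 6 = i - 1) i) hk))) hqnadj
    have hpqne : p ≠ q := fun h => hqnadj (h ▸ hup)
    have hpq : B.Adj p q := hclq (i + 2) hpA2 hqA2 hpqne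
    exact noC4' h4 hup hpq hvq.symm hadjuv.symm hqnadj (fun h => hpnadj h.symm)
      (Ne.symm hqu) hpv
  have hchainM : ∀ i, ∀ u ∈ braceletMinus B A i, ∀ v ∈ braceletMinus B A i,
      cnbr B Set.univ u ⊆ cnbr B Set.univ v ∨ cnbr B Set.univ v ⊆ cnbr B Set.univ u := by
    intro i u hu v hv
    by_cases huv : u = v
    · subst huv; exact Or.inl subset_rfl
    by_contra hcon
    push_neg at hcon
    obtain ⟨hnuv, hnvu⟩ := hcon
    rw [Set.not_subset] at hnuv hnvu
    obtain ⟨p, hp1, hp2⟩ := hnuv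
    obtain ⟨q, hq1, hq2⟩ := hnvu
    obtain ⟨humem, hminusU, -⟩ := hu
    obtain ⟨hvmem, hminusV, -⟩ := hv
    have hadjuv : B.Adj u v := hclq i humem hvmem huv
    have hp2' : ¬ (p = v ∨ B.Adj v p) := fun h => hp2 ⟨Set.mem_univ p, h⟩
    push_neg at hp2'
    obtain ⟨hpv, hpnadj⟩ := hp2'
    have hup : B.Adj u p := by
      rcases hp1.2 with rfl | h
      · exact (hpnadj hadjuv.symm).elim
      · exact h
    have hq2' : ¬ (q = u ∨ B.Adj u q) := fun h => hq2 ⟨Set.mem_univ q, h⟩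
    push_neg at hq2'
    obtain ⟨hqu, hqnadj⟩ := hq2'
    have hvq : B.Adj v q := by
      rcases hq1.2 with rfl | h
      · exact (hqnadj hadjuv).elim
      · exact h
    have hcase7 : ∀ d : ZMod 7, d = 0 ∨ d = 1 ∨ d = 2 ∨ d = 3 ∨ d = 4 ∨ d = 5 ∨ d = 6 := by
      decide
    have hpA5 : p ∈ A (i + 5) := by
      obtain ⟨k, hk⟩ := Set.mem_iUnion.1 (show p ∈ ⋃ j, A j by rw [hU]; trivial)
      have hkeq : k = i + (k - i) := by ring
      rcases hcase7 (k - i) with h|h|h|h|h|h|h <;> rw [h] at hkeq <;> rw [hkeq] at hk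
      · exact absurd (hclq i hvmem (hAc _ _ (by ring) hk) (Ne.symm hpv)) hpnadj
      · exact absurd (hcompl i v hvmem p (Or.inr hk)) hpnadj
      · exact absurd hup (hminusU p hk)
      · exact absurd hup (nadjP3 i u humem p hk)
      · exact absurd hup (nadjP4 i u humem p hk)
      · exact hk
      · exact absurd (hcompl i v hvmem p
          (Or.inl (hAc _ _ ((by decide : ∀ i : ZMod 7, i + 6 = i - 1) i) hk))) hpnadj
    have hqA5 : q ∈ A (i + 5) := by
      obtain ⟨k, hk⟩ := Set.mem_iUnion.1 (show q ∈ ⋃ j, A j by rw [hU]; trivial)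
      have hkeq : k = i + (k - i) := by ring
      rcases hcase7 (k - i) with h|h|h|h|h|h|h <;> rw [h] at hkeq <;> rw [hkeq] at hk
      · exact absurd (hclq i humem (hAc _ _ (by ring) hk) (Ne.symm hqu)) hqnadj
      · exact absurd (hcompl i u humem q (Or.inr hk)) hqnadj
      · exact absurd hvq (hminusV q hk)
      · exact absurd hvq (nadjP3 i v hvmem q hk)
      · exact absurd hvq (nadjP4 i v hvmem q hk)
      · exact hk
      · exact absurd (hcompl i u humem q
          (Or.inl (hAc _ _ ((by decide : ∀ i : ZMod 7, i + 6 = i - 1) i) hk))) hqnadj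
    have hpqne : p ≠ q := fun h => hqnadj (h ▸ hup)
    have hpq : B.Adj p q := hclq (i + 5) hpA5 hqA5 hpqne
    exact noC4' h4 hup hpq hvq.symm hadjuv.symm hqnadj (fun h => hpnadj h.symm)
      (Ne.symm hqu) hpv
  -- choosing istar via the combinatorial lemma
  have hg : ∀ i : ZMod 7, ¬ ((fun j => decide (E j)) i = true ∧ (fun j => decide (E j)) (i + 3) = true) := by
    intro i h
    exact claim3 i (of_decide_eq_true h.1) (of_decide_eq_true h.2)
  obtain ⟨t, ht1, ht2, ht3, ht4⟩ := comb7 (fun j => decide (E j)) hg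
  have hnE : ∀ j : ZMod 7, decide (E j) = false → ¬ E j := fun j h hE => by
    rw [decide_eq_true hE] at h
    exact Bool.noConfusion h
  have hplusE : ∀ j : ZMod 7, ¬ E j → braceletPlus B A j = ∅ := by
    intro j hj
    ext v
    simp only [braceletPlus, Set.mem_setOf_eq, Set.mem_empty_iff_false, iff_false, not_and]
    intro hv _ h
    exact hj ⟨v, hv, h⟩
  have hminusE : ∀ j : ZMod 7, ¬ E (j + 5) → braceletMinus B A j = ∅ := by
    intro j hj
    ext v
    simp only [braceletMinus, Set.mem_setOf_eq, Set.mem_empty_iff_false, iff_false, not_and]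
    intro hv _ h
    obtain ⟨w, hw, hvw⟩ := h
    exact hj ⟨w, hAc _ _ ((by decide : ∀ j : ZMod 7, j - 2 = j + 5) j) hw, v,
      hAc _ _ ((by decide : ∀ j : ZMod 7, j = j + 5 + 2) j) hv, hvw.symm⟩
  refine ⟨t, hU, hdisj, hI, hpart, hchainP, hchainM, hf, ?_, ?_, ?_, ?_, ?_, ?_, ?_, ?_⟩
  · exact hplusE _ (by rw [(by decide : ∀ t : ZMod 7, t - 3 = t + 4) t]; exact hnE _ ht4)
  · exact hminusE _ (by rw [(by decide : ∀ t : ZMod 7, t - 3 + 5 = t + 2) t]; exact hnE _ ht2)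
  · exact hplusE _ (hnE _ ht3)
  · exact hminusE _ (by rw [(by decide : ∀ t : ZMod 7, t + 3 + 5 = t + 1) t]; exact hnE _ ht1)
  · exact hminusE _ (by rw [(by decide : ∀ t : ZMod 7, t - 2 + 5 = t + 3) t]; exact hnE _ ht3)
  · exact hplusE _ (hnE _ ht2)
  · exact hminusE _ (by rw [(by decide : ∀ t : ZMod 7, t - 1 + 5 = t + 4) t]; exact hnE _ ht4)
  · exact hplusE _ (hnE _ ht1)
end

section
/- Let G be a finite simple (P_7, C_4, C_5)-free graph, and let H = x_0, x_1, ..., x_6, x_0 (indices in ℤ7) be a 7-hole in G. For each i ∈ ℤ7, let A_i = { x ∈ V(G) : N[x] ∩ V(H) = {x_{i−1}, x_i, x_{i+1}} }, where N[x] denotes the closed neighborhood of x. Let B be the subgraph of G induced by the union of the sets A_i. Then B is a 7-bracelet and {A_i}_{i∈ℤ7} is a good partition for it. -/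
open SimpleGraph

open Paper

private lemma mk_c4 {V : Type*} {G : SimpleGraph V} {a b c d : V}
    (e01 : G.Adj a b)
    (e12 : G.Adj b c)
    (e23 : G.Adj c d)
    (e03 : G.Adj a d)
    (n02 : ¬ G.Adj a c)
    (d02 : a ≠ c)
    (n13 : ¬ G.Adj b d)
    (d13 : b ≠ d) :
    ContainsInducedOn G Set.univ (cycG 4) := by
  have d01 := e01.ne
  have d12 := e12.ne
  have d23 := e23.ne
  have d03 := e03.ne
  have hc : ∀ p q, (cycG 4).Adj p q ↔ (p ≠ q ∧ (p + 1 = q ∨ q + 1 = p)) := fun p q => SimpleGraph.fromRel_adj _ p q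
  have hcp : ∀ p q, (p ≠ q ∧ (p + 1 = q ∨ q + 1 = p)) → (cycG 4).Adj p q := fun p q h => (hc p q).mpr h
  have hcn : ∀ p q, ¬(p ≠ q ∧ (p + 1 = q ∨ q + 1 = p)) → ¬(cycG 4).Adj p q := fun p q h ha => h ((hc p q).mp ha)
  refine ⟨⟨(![a,b,c,d] : Fin 4 → V), ?_⟩, fun _ => trivial, ?_⟩
  · intro i j h
    fin_cases i <;> fin_cases j
    exacts [rfl,
        absurd h (e01.ne),
        absurd h d02,
        absurd h (e03.ne),
        absurd h (e01.ne.symm),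
        rfl,
        absurd h (e12.ne),
        absurd h d13,
        absurd h d02.symm,
        absurd h (e12.ne.symm),
        rfl,
        absurd h (e23.ne),
        absurd h (e03.ne.symm),
        absurd h d13.symm,
        absurd h (e23.ne.symm),
        rfl]
  · intro i j
    fin_cases i <;> fin_cases j
    exacts [iff_of_false (G.irrefl) (fun ha => ha.ne rfl),
        iff_of_true e01 (hcp 0 1 (by decide)),
        iff_of_false n02 (hcn 0 2 (by decide)),
        iff_of_true e03 (hcp 0 3 (by decide)),
        iff_of_true e01.symm (hcp 1 0 (by decide)),
        iff_of_false (G.irrefl) (fun ha => ha.ne rfl),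
        iff_of_true e12 (hcp 1 2 (by decide)),
        iff_of_false n13 (hcn 1 3 (by decide)),
        iff_of_false (fun ha => n02 ha.symm) (hcn 2 0 (by decide)),
        iff_of_true e12.symm (hcp 2 1 (by decide)),
        iff_of_false (G.irrefl) (fun ha => ha.ne rfl),
        iff_of_true e23 (hcp 2 3 (by decide)),
        iff_of_true e03.symm (hcp 3 0 (by decide)),
        iff_of_false (fun ha => n13 ha.symm) (hcn 3 1 (by decide)),
        iff_of_true e23.symm (hcp 3 2 (by decide)),
        iff_of_false (G.irrefl) (fun ha => ha.ne rfl)]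

private lemma mk_c5 {V : Type*} {G : SimpleGraph V} {a b c d e : V}
    (e01 : G.Adj a b)
    (e12 : G.Adj b c)
    (e23 : G.Adj c d)
    (e34 : G.Adj d e)
    (e04 : G.Adj a e)
    (n02 : ¬ G.Adj a c)
    (d02 : a ≠ c)
    (n03 : ¬ G.Adj a d)
    (d03 : a ≠ d)
    (n13 : ¬ G.Adj b d)
    (d13 : b ≠ d)
    (n14 : ¬ G.Adj b e)
    (d14 : b ≠ e)
    (n24 : ¬ G.Adj c e)
    (d24 : c ≠ e) :
    ContainsInducedOn G Set.univ (cycG 5) := by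
  have d01 := e01.ne
  have d12 := e12.ne
  have d23 := e23.ne
  have d34 := e34.ne
  have d04 := e04.ne
  have hc : ∀ p q, (cycG 5).Adj p q ↔ (p ≠ q ∧ (p + 1 = q ∨ q + 1 = p)) := fun p q => SimpleGraph.fromRel_adj _ p q
  have hcp : ∀ p q, (p ≠ q ∧ (p + 1 = q ∨ q + 1 = p)) → (cycG 5).Adj p q := fun p q h => (hc p q).mpr h
  have hcn : ∀ p q, ¬(p ≠ q ∧ (p + 1 = q ∨ q + 1 = p)) → ¬(cycG 5).Adj p q := fun p q h ha => h ((hc p q).mp ha)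
  refine ⟨⟨(![a,b,c,d,e] : Fin 5 → V), ?_⟩, fun _ => trivial, ?_⟩
  · intro i j h
    fin_cases i <;> fin_cases j
    exacts [rfl,
        absurd h (e01.ne),
        absurd h d02,
        absurd h d03,
        absurd h (e04.ne),
        absurd h (e01.ne.symm),
        rfl,
        absurd h (e12.ne),
        absurd h d13,
        absurd h d14,
        absurd h d02.symm,
        absurd h (e12.ne.symm),
        rfl,
        absurd h (e23.ne),
        absurd h d24,
        absurd h d03.symm,
        absurd h d13.symm,
        absurd h (e23.ne.symm),
        rfl,
        absurd h (e34.ne),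
        absurd h (e04.ne.symm),
        absurd h d14.symm,
        absurd h d24.symm,
        absurd h (e34.ne.symm),
        rfl]
  · intro i j
    fin_cases i <;> fin_cases j
    exacts [iff_of_false (G.irrefl) (fun ha => ha.ne rfl),
        iff_of_true e01 (hcp 0 1 (by decide)),
        iff_of_false n02 (hcn 0 2 (by decide)),
        iff_of_false n03 (hcn 0 3 (by decide)),
        iff_of_true e04 (hcp 0 4 (by decide)),
        iff_of_true e01.symm (hcp 1 0 (by decide)),
        iff_of_false (G.irrefl) (fun ha => ha.ne rfl),
        iff_of_true e12 (hcp 1 2 (by decide)),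
        iff_of_false n13 (hcn 1 3 (by decide)),
        iff_of_false n14 (hcn 1 4 (by decide)),
        iff_of_false (fun ha => n02 ha.symm) (hcn 2 0 (by decide)),
        iff_of_true e12.symm (hcp 2 1 (by decide)),
        iff_of_false (G.irrefl) (fun ha => ha.ne rfl),
        iff_of_true e23 (hcp 2 3 (by decide)),
        iff_of_false n24 (hcn 2 4 (by decide)),
        iff_of_false (fun ha => n03 ha.symm) (hcn 3 0 (by decide)),
        iff_of_false (fun ha => n13 ha.symm) (hcn 3 1 (by decide)),
        iff_of_true e23.symm (hcp 3 2 (by decide)),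
        iff_of_false (G.irrefl) (fun ha => ha.ne rfl),
        iff_of_true e34 (hcp 3 4 (by decide)),
        iff_of_true e04.symm (hcp 4 0 (by decide)),
        iff_of_false (fun ha => n14 ha.symm) (hcn 4 1 (by decide)),
        iff_of_false (fun ha => n24 ha.symm) (hcn 4 2 (by decide)),
        iff_of_true e34.symm (hcp 4 3 (by decide)),
        iff_of_false (G.irrefl) (fun ha => ha.ne rfl)]

private lemma mk_p7 {V : Type*} {G : SimpleGraph V} {v0 v1 v2 v3 v4 v5 v6 : V}
    (e01 : G.Adj v0 v1)
    (e12 : G.Adj v1 v2)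
    (e23 : G.Adj v2 v3)
    (e34 : G.Adj v3 v4)
    (e45 : G.Adj v4 v5)
    (e56 : G.Adj v5 v6)
    (n02 : ¬ G.Adj v0 v2)
    (d02 : v0 ≠ v2)
    (n03 : ¬ G.Adj v0 v3)
    (d03 : v0 ≠ v3)
    (n04 : ¬ G.Adj v0 v4)
    (d04 : v0 ≠ v4)
    (n05 : ¬ G.Adj v0 v5)
    (d05 : v0 ≠ v5)
    (n06 : ¬ G.Adj v0 v6)
    (d06 : v0 ≠ v6)
    (n13 : ¬ G.Adj v1 v3)
    (d13 : v1 ≠ v3)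
    (n14 : ¬ G.Adj v1 v4)
    (d14 : v1 ≠ v4)
    (n15 : ¬ G.Adj v1 v5)
    (d15 : v1 ≠ v5)
    (n16 : ¬ G.Adj v1 v6)
    (d16 : v1 ≠ v6)
    (n24 : ¬ G.Adj v2 v4)
    (d24 : v2 ≠ v4)
    (n25 : ¬ G.Adj v2 v5)
    (d25 : v2 ≠ v5)
    (n26 : ¬ G.Adj v2 v6)
    (d26 : v2 ≠ v6)
    (n35 : ¬ G.Adj v3 v5)
    (d35 : v3 ≠ v5)
    (n36 : ¬ G.Adj v3 v6)
    (d36 : v3 ≠ v6)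
    (n46 : ¬ G.Adj v4 v6)
    (d46 : v4 ≠ v6) :
    ContainsInducedOn G Set.univ (pathG 7) := by
  have d01 := e01.ne
  have d12 := e12.ne
  have d23 := e23.ne
  have d34 := e34.ne
  have d45 := e45.ne
  have d56 := e56.ne
  have hc : ∀ p q : Fin 7, (pathG 7).Adj p q ↔ (p ≠ q ∧ ((p : ℕ) + 1 = (q : ℕ) ∨ (q : ℕ) + 1 = (p : ℕ))) := fun p q => SimpleGraph.fromRel_adj _ p q
  have hcp : ∀ p q : Fin 7, (p ≠ q ∧ ((p : ℕ) + 1 = (q : ℕ) ∨ (q : ℕ) + 1 = (p : ℕ))) → (pathG 7).Adj p q := fun p q h => (hc p q).mpr h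
  have hcn : ∀ p q : Fin 7, ¬(p ≠ q ∧ ((p : ℕ) + 1 = (q : ℕ) ∨ (q : ℕ) + 1 = (p : ℕ))) → ¬(pathG 7).Adj p q := fun p q h ha => h ((hc p q).mp ha)
  refine ⟨⟨(![v0,v1,v2,v3,v4,v5,v6] : Fin 7 → V), ?_⟩, fun _ => trivial, ?_⟩
  · intro i j h
    fin_cases i <;> fin_cases j
    exacts [rfl,
        absurd h (e01.ne),
        absurd h d02,
        absurd h d03,
        absurd h d04,
        absurd h d05,
        absurd h d06,
        absurd h (e01.ne.symm),
        rfl,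
        absurd h (e12.ne),
        absurd h d13,
        absurd h d14,
        absurd h d15,
        absurd h d16,
        absurd h d02.symm,
        absurd h (e12.ne.symm),
        rfl,
        absurd h (e23.ne),
        absurd h d24,
        absurd h d25,
        absurd h d26,
        absurd h d03.symm,
        absurd h d13.symm,
        absurd h (e23.ne.symm),
        rfl,
        absurd h (e34.ne),
        absurd h d35,
        absurd h d36,
        absurd h d04.symm,
        absurd h d14.symm,
        absurd h d24.symm,
        absurd h (e34.ne.symm),
        rfl,
        absurd h (e45.ne),
        absurd h d46,
        absurd h d05.symm,
        absurd h d15.symm,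
        absurd h d25.symm,
        absurd h d35.symm,
        absurd h (e45.ne.symm),
        rfl,
        absurd h (e56.ne),
        absurd h d06.symm,
        absurd h d16.symm,
        absurd h d26.symm,
        absurd h d36.symm,
        absurd h d46.symm,
        absurd h (e56.ne.symm),
        rfl]
  · intro i j
    fin_cases i <;> fin_cases j
    exacts [iff_of_false (G.irrefl) (fun ha => ha.ne rfl),
        iff_of_true e01 (hcp 0 1 (by decide)),
        iff_of_false n02 (hcn 0 2 (by decide)),
        iff_of_false n03 (hcn 0 3 (by decide)),
        iff_of_false n04 (hcn 0 4 (by decide)),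
        iff_of_false n05 (hcn 0 5 (by decide)),
        iff_of_false n06 (hcn 0 6 (by decide)),
        iff_of_true e01.symm (hcp 1 0 (by decide)),
        iff_of_false (G.irrefl) (fun ha => ha.ne rfl),
        iff_of_true e12 (hcp 1 2 (by decide)),
        iff_of_false n13 (hcn 1 3 (by decide)),
        iff_of_false n14 (hcn 1 4 (by decide)),
        iff_of_false n15 (hcn 1 5 (by decide)),
        iff_of_false n16 (hcn 1 6 (by decide)),
        iff_of_false (fun ha => n02 ha.symm) (hcn 2 0 (by decide)),
        iff_of_true e12.symm (hcp 2 1 (by decide)),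
        iff_of_false (G.irrefl) (fun ha => ha.ne rfl),
        iff_of_true e23 (hcp 2 3 (by decide)),
        iff_of_false n24 (hcn 2 4 (by decide)),
        iff_of_false n25 (hcn 2 5 (by decide)),
        iff_of_false n26 (hcn 2 6 (by decide)),
        iff_of_false (fun ha => n03 ha.symm) (hcn 3 0 (by decide)),
        iff_of_false (fun ha => n13 ha.symm) (hcn 3 1 (by decide)),
        iff_of_true e23.symm (hcp 3 2 (by decide)),
        iff_of_false (G.irrefl) (fun ha => ha.ne rfl),
        iff_of_true e34 (hcp 3 4 (by decide)),
        iff_of_false n35 (hcn 3 5 (by decide)),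
        iff_of_false n36 (hcn 3 6 (by decide)),
        iff_of_false (fun ha => n04 ha.symm) (hcn 4 0 (by decide)),
        iff_of_false (fun ha => n14 ha.symm) (hcn 4 1 (by decide)),
        iff_of_false (fun ha => n24 ha.symm) (hcn 4 2 (by decide)),
        iff_of_true e34.symm (hcp 4 3 (by decide)),
        iff_of_false (G.irrefl) (fun ha => ha.ne rfl),
        iff_of_true e45 (hcp 4 5 (by decide)),
        iff_of_false n46 (hcn 4 6 (by decide)),
        iff_of_false (fun ha => n05 ha.symm) (hcn 5 0 (by decide)),
        iff_of_false (fun ha => n15 ha.symm) (hcn 5 1 (by decide)),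
        iff_of_false (fun ha => n25 ha.symm) (hcn 5 2 (by decide)),
        iff_of_false (fun ha => n35 ha.symm) (hcn 5 3 (by decide)),
        iff_of_true e45.symm (hcp 5 4 (by decide)),
        iff_of_false (G.irrefl) (fun ha => ha.ne rfl),
        iff_of_true e56 (hcp 5 6 (by decide)),
        iff_of_false (fun ha => n06 ha.symm) (hcn 6 0 (by decide)),
        iff_of_false (fun ha => n16 ha.symm) (hcn 6 1 (by decide)),
        iff_of_false (fun ha => n26 ha.symm) (hcn 6 2 (by decide)),
        iff_of_false (fun ha => n36 ha.symm) (hcn 6 3 (by decide)),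
        iff_of_false (fun ha => n46 ha.symm) (hcn 6 4 (by decide)),
        iff_of_true e56.symm (hcp 6 5 (by decide)),
        iff_of_false (G.irrefl) (fun ha => ha.ne rfl)]


namespace Stmt12Aux

section

variable {V : Type*} {G : SimpleGraph V} {x : ZMod 7 → V} {A : ZMod 7 → Set V}
  (hx : IsHole7 G x)
  (hA : ∀ i : ZMod 7, A i =
      {v : V | {w : V | w = v ∨ G.Adj v w} ∩ Set.range x = {x (i - 1), x i, x (i + 1)}})

include hx hA

/-- Membership characterization. -/
private lemma keyL3 {v : V} {i : ZMod 7} (hv : v ∈ A i) (j : ZMod 7) :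
    (x j = v ∨ G.Adj v (x j)) ↔ (j = i + 6 ∨ j = i ∨ j = i + 1) := by
  have hset : {w : V | w = v ∨ G.Adj v w} ∩ Set.range x = {x (i - 1), x i, x (i + 1)} := by
    have h := hv; rw [hA i] at h; exact h
  rw [(show i - 1 = i + 6 from (by decide : ∀ k : ZMod 7, k - 1 = k + 6) i)] at hset
  constructor
  · intro hj
    have hmem : x j ∈ ({x (i + 6), x i, x (i + 1)} : Set V) := by
      rw [← hset]; exact ⟨hj, ⟨j, rfl⟩⟩
    simp only [Set.mem_insert_iff, Set.mem_singleton_iff] at hmem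
    rcases hmem with h | h | h
    · exact Or.inl (hx.1 h)
    · exact Or.inr (Or.inl (hx.1 h))
    · exact Or.inr (Or.inr (hx.1 h))
  · intro hj
    have hmem : x j ∈ ({x (i + 6), x i, x (i + 1)} : Set V) := by
      rcases hj with h | h | h <;> subst h
      · exact Or.inl rfl
      · exact Or.inr (Or.inl rfl)
      · exact Or.inr (Or.inr rfl)
    rw [← hset] at hmem
    exact hmem.1

private lemma xmem (i : ZMod 7) : x i ∈ A i := by
  rw [hA i]
  show {w : V | w = x i ∨ G.Adj (x i) w} ∩ Set.range x = {x (i - 1), x i, x (i + 1)}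
  ext w
  constructor
  · rintro ⟨hw, j, rfl⟩
    simp only [Set.mem_insert_iff, Set.mem_singleton_iff]
    rcases hw with h | h
    · exact Or.inr (Or.inl h)
    · rcases (hx.2 i j).mp h with h1 | h1
      · exact Or.inl (congrArg x (by linear_combination -h1))
      · exact Or.inr (Or.inr (congrArg x (by linear_combination h1)))
  · intro hw
    simp only [Set.mem_insert_iff, Set.mem_singleton_iff] at hw
    rcases hw with h | h | h <;> subst h
    · exact ⟨Or.inr ((hx.2 i (i - 1)).mpr (Or.inl (by ring))), ⟨i - 1, rfl⟩⟩
    · exact ⟨Or.inl rfl, ⟨i, rfl⟩⟩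
    · exact ⟨Or.inr ((hx.2 i (i + 1)).mpr (Or.inr (by ring))), ⟨i + 1, rfl⟩⟩

private lemma disjA (i j : ZMod 7) (hij : i ≠ j) : Disjoint (A i) (A j) := by
  rw [Set.disjoint_left]
  intro v hvi hvj
  have key : ∀ k : ZMod 7, (k = i + 6 ∨ k = i ∨ k = i + 1) ↔ (k = j + 6 ∨ k = j ∨ k = j + 1) :=
    fun k => (keyL3 hx hA hvi k).symm.trans (keyL3 hx hA hvj k)
  exact hij ((by decide : ∀ i j : ZMod 7,
    (∀ k : ZMod 7, (k = i + 6 ∨ k = i ∨ k = i + 1) ↔ (k = j + 6 ∨ k = j ∨ k = j + 1)) → i = j)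
    i j key)

private lemma eqx {v : V} {i j : ZMod 7} (hv : v ∈ A i) (he : v = x j) : j = i := by
  by_contra hne
  exact Set.disjoint_left.mp (disjA hx hA j i hne) (xmem hx hA j) (he ▸ hv)

private lemma neqx {v : V} {i j : ZMod 7} (hv : v ∈ A i) (hne : j ≠ i) : v ≠ x j :=
  fun he => hne (eqx hx hA hv he)

private lemma aneq {u w : V} {i j : ZMod 7} (hu : u ∈ A i) (hw : w ∈ A j) (hij : i ≠ j) :
    u ≠ w :=
  fun he => Set.disjoint_left.mp (disjA hx hA i j hij) hu (he ▸ hw)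

private lemma adjx {v : V} {i j : ZMod 7} (hv : v ∈ A i) (hj : j = i + 6 ∨ j = i + 1) :
    G.Adj v (x j) := by
  rcases (keyL3 hx hA hv j).mpr (by tauto) with he | ha
  · exfalso
    have := eqx hx hA hv he.symm
    rcases hj with h | h
    · exact ((by decide : ∀ k : ZMod 7, ¬ k + 6 = k) i) (h.symm.trans this)
    · exact ((by decide : ∀ k : ZMod 7, ¬ k + 1 = k) i) (h.symm.trans this)
  · exact ha

private lemma nadjx {v : V} {i j : ZMod 7} (hv : v ∈ A i)
    (hj : ¬ (j = i + 6 ∨ j = i ∨ j = i + 1)) : ¬ G.Adj v (x j) :=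
  fun ha => hj ((keyL3 hx hA hv j).mp (Or.inr ha))

end

end Stmt12Aux

namespace Stmt12Aux

section

variable {V : Type*} {G : SimpleGraph V} {x : ZMod 7 → V} {A : ZMod 7 → Set V}
  (hx : IsHole7 G x)
  (hA : ∀ i : ZMod 7, A i =
      {v : V | {w : V | w = v ∨ G.Adj v w} ∩ Set.range x = {x (i - 1), x i, x (i + 1)}})

include hx

private lemma hxnadj {j k : ZMod 7} (h1 : j - k ≠ 1) (h2 : k - j ≠ 1) :
    ¬ G.Adj (x j) (x k) :=
  fun ha => ((hx.2 j k).mp ha).elim h1 h2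

private lemma hxadj {j k : ZMod 7} (h1 : j - k = 1 ∨ k - j = 1) : G.Adj (x j) (x k) :=
  (hx.2 j k).mpr h1

private lemma hxne {j k : ZMod 7} (h : j ≠ k) : x j ≠ x k :=
  fun he => h (hx.1 he)

include hA

private lemma cliqueA (h4 : Paper.Free G (cycG 4)) (i : ZMod 7) : G.IsClique (A i) := by
  intro u hu v hv hne
  by_contra hn
  exact h4 (mk_c4
    (adjx hx hA hu (Or.inr rfl))
    ((adjx hx hA hv (Or.inr rfl)).symm)
    (adjx hx hA hv (Or.inl rfl))
    (adjx hx hA hu (Or.inl rfl))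
    hn hne
    (hxnadj hx ((by decide : ∀ k : ZMod 7, (k + 1) - (k + 6) ≠ 1) i)
      ((by decide : ∀ k : ZMod 7, (k + 6) - (k + 1) ≠ 1) i))
    (hxne hx ((by decide : ∀ k : ZMod 7, k + 1 ≠ k + 6) i)))

private lemma complA (h7 : Paper.Free G (pathG 7)) {u w : V} {i : ZMod 7}
    (hu : u ∈ A i) (hw : w ∈ A (i + 1)) : G.Adj u w := by
  by_contra hn
  have hne : u ≠ w := aneq hx hA hu hw ((by decide : ∀ k : ZMod 7, k ≠ k + 1) i)
  have hwxi : x i = w ∨ G.Adj w (x i) :=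
    (keyL3 hx hA hw i).mpr (Or.inl ((by decide : ∀ k : ZMod 7, k = (k + 1) + 6) i))
  rcases hwxi with he | hwxi
  · exact ((by decide : ∀ k : ZMod 7, ¬ k = k + 1) i) (eqx hx hA hw he.symm)
  by_cases hui : u = x i
  · exact hn (by rw [hui]; exact hwxi.symm)
  by_cases hw1 : w = x (i + 1)
  · exact hn (by rw [hw1]; exact adjx hx hA hu (Or.inr rfl))
  have e01 : G.Adj w (x (i + 1)) := by
    rcases (keyL3 hx hA hw (i + 1)).mpr (Or.inr (Or.inl rfl)) with he | ha
    · exact absurd he.symm hw1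
    · exact ha
  refine h7 (mk_p7 e01 ((adjx hx hA hu (Or.inr rfl)).symm) (adjx hx hA hu (Or.inl rfl))
    (hxadj (j := i + 6) (k := i + 5) hx (Or.inl ((by decide : ∀ k : ZMod 7, (k+6) - (k+5) = 1) i)))
    (hxadj (j := i + 5) (k := i + 4) hx (Or.inl ((by decide : ∀ k : ZMod 7, (k+5) - (k+4) = 1) i)))
    (hxadj (j := i + 4) (k := i + 3) hx (Or.inl ((by decide : ∀ k : ZMod 7, (k+4) - (k+3) = 1) i)))
    (fun h => hn h.symm) hne.symm
    ?_ ?_ ?_ ?_ ?_ ?_ ?_ ?_ ?_ ?_ ?_ ?_ ?_ ?_ ?_ ?_ ?_ ?_ ?_ ?_ ?_ ?_ ?_ ?_ ?_ ?_ ?_ ?_)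
  -- (0,3) : w vs x (i+6)
  · exact nadjx hx hA hw ((by decide : ∀ k : ZMod 7,
      ¬ (k + 6 = (k+1) + 6 ∨ k + 6 = k + 1 ∨ k + 6 = (k+1) + 1)) i)
  · exact neqx hx hA hw ((by decide : ∀ k : ZMod 7, k + 6 ≠ k + 1) i)
  -- (0,4) : w vs x (i+5)
  · exact nadjx hx hA hw ((by decide : ∀ k : ZMod 7,
      ¬ (k + 5 = (k+1) + 6 ∨ k + 5 = k + 1 ∨ k + 5 = (k+1) + 1)) i)
  · exact neqx hx hA hw ((by decide : ∀ k : ZMod 7, k + 5 ≠ k + 1) i)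
  -- (0,5) : w vs x (i+4)
  · exact nadjx hx hA hw ((by decide : ∀ k : ZMod 7,
      ¬ (k + 4 = (k+1) + 6 ∨ k + 4 = k + 1 ∨ k + 4 = (k+1) + 1)) i)
  · exact neqx hx hA hw ((by decide : ∀ k : ZMod 7, k + 4 ≠ k + 1) i)
  -- (0,6) : w vs x (i+3)
  · exact nadjx hx hA hw ((by decide : ∀ k : ZMod 7,
      ¬ (k + 3 = (k+1) + 6 ∨ k + 3 = k + 1 ∨ k + 3 = (k+1) + 1)) i)
  · exact neqx hx hA hw ((by decide : ∀ k : ZMod 7, k + 3 ≠ k + 1) i)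
  -- (1,3) : x(i+1) vs x(i+6)
  · exact hxnadj hx ((by decide : ∀ k : ZMod 7, (k+1) - (k+6) ≠ 1) i)
      ((by decide : ∀ k : ZMod 7, (k+6) - (k+1) ≠ 1) i)
  · exact hxne hx ((by decide : ∀ k : ZMod 7, k + 1 ≠ k + 6) i)
  -- (1,4)
  · exact hxnadj hx ((by decide : ∀ k : ZMod 7, (k+1) - (k+5) ≠ 1) i)
      ((by decide : ∀ k : ZMod 7, (k+5) - (k+1) ≠ 1) i)
  · exact hxne hx ((by decide : ∀ k : ZMod 7, k + 1 ≠ k + 5) i)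
  -- (1,5)
  · exact hxnadj hx ((by decide : ∀ k : ZMod 7, (k+1) - (k+4) ≠ 1) i)
      ((by decide : ∀ k : ZMod 7, (k+4) - (k+1) ≠ 1) i)
  · exact hxne hx ((by decide : ∀ k : ZMod 7, k + 1 ≠ k + 4) i)
  -- (1,6)
  · exact hxnadj hx ((by decide : ∀ k : ZMod 7, (k+1) - (k+3) ≠ 1) i)
      ((by decide : ∀ k : ZMod 7, (k+3) - (k+1) ≠ 1) i)
  · exact hxne hx ((by decide : ∀ k : ZMod 7, k + 1 ≠ k + 3) i)
  -- (2,4) : u vs x (i+5)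
  · exact nadjx hx hA hu ((by decide : ∀ k : ZMod 7,
      ¬ (k + 5 = k + 6 ∨ k + 5 = k ∨ k + 5 = k + 1)) i)
  · exact neqx hx hA hu ((by decide : ∀ k : ZMod 7, k + 5 ≠ k) i)
  -- (2,5)
  · exact nadjx hx hA hu ((by decide : ∀ k : ZMod 7,
      ¬ (k + 4 = k + 6 ∨ k + 4 = k ∨ k + 4 = k + 1)) i)
  · exact neqx hx hA hu ((by decide : ∀ k : ZMod 7, k + 4 ≠ k) i)
  -- (2,6)
  · exact nadjx hx hA hu ((by decide : ∀ k : ZMod 7,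
      ¬ (k + 3 = k + 6 ∨ k + 3 = k ∨ k + 3 = k + 1)) i)
  · exact neqx hx hA hu ((by decide : ∀ k : ZMod 7, k + 3 ≠ k) i)
  -- (3,5) : x(i+6) vs x(i+4)
  · exact hxnadj hx ((by decide : ∀ k : ZMod 7, (k+6) - (k+4) ≠ 1) i)
      ((by decide : ∀ k : ZMod 7, (k+4) - (k+6) ≠ 1) i)
  · exact hxne hx ((by decide : ∀ k : ZMod 7, k + 6 ≠ k + 4) i)
  -- (3,6)
  · exact hxnadj hx ((by decide : ∀ k : ZMod 7, (k+6) - (k+3) ≠ 1) i)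
      ((by decide : ∀ k : ZMod 7, (k+3) - (k+6) ≠ 1) i)
  · exact hxne hx ((by decide : ∀ k : ZMod 7, k + 6 ≠ k + 3) i)
  -- (4,6)
  · exact hxnadj hx ((by decide : ∀ k : ZMod 7, (k+5) - (k+3) ≠ 1) i)
      ((by decide : ∀ k : ZMod 7, (k+3) - (k+5) ≠ 1) i)
  · exact hxne hx ((by decide : ∀ k : ZMod 7, k + 5 ≠ k + 3) i)

end

end Stmt12Aux

namespace Stmt12Aux

section

variable {V : Type*} {G : SimpleGraph V} {x : ZMod 7 → V} {A : ZMod 7 → Set V}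
  (hx : IsHole7 G x)
  (hA : ∀ i : ZMod 7, A i =
      {v : V | {w : V | w = v ∨ G.Adj v w} ∩ Set.range x = {x (i - 1), x i, x (i + 1)}})

include hx hA

private lemma anti3A (h4 : Paper.Free G (cycG 4)) {u w : V} {i : ZMod 7}
    (hu : u ∈ A i) (hw : w ∈ A (i + 3)) : ¬ G.Adj u w := by
  intro hn
  refine h4 (mk_c4 (a := u) (b := x (i + 1)) (c := x (i + 2)) (d := w)
    (adjx hx hA hu (Or.inr rfl))
    (hxadj (j := i + 1) (k := i + 2) hx (Or.inr ((by decide : ∀ k : ZMod 7, (k+2) - (k+1) = 1) i)))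
    ((adjx hx hA hw (Or.inl ((by decide : ∀ k : ZMod 7, k + 2 = (k + 3) + 6) i ▸ rfl))).symm)
    hn ?_ ?_ ?_ ?_)
  · exact nadjx hx hA hu ((by decide : ∀ k : ZMod 7,
      ¬ (k + 2 = k + 6 ∨ k + 2 = k ∨ k + 2 = k + 1)) i)
  · exact neqx hx hA hu ((by decide : ∀ k : ZMod 7, k + 2 ≠ k) i)
  · exact fun h => (nadjx hx hA hw ((by decide : ∀ k : ZMod 7,
      ¬ (k + 1 = (k+3) + 6 ∨ k + 1 = k + 3 ∨ k + 1 = (k+3) + 1)) i)) h.symm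
  · exact (neqx hx hA hw ((by decide : ∀ k : ZMod 7, k + 1 ≠ k + 3) i)).symm

private lemma nobothA (h4 : Paper.Free G (cycG 4)) (h5 : Paper.Free G (cycG 5)) {v p m : V} {i : ZMod 7}
    (hv : v ∈ A i) (hp : p ∈ A (i + 2)) (hm : m ∈ A (i + 5))
    (hvp : G.Adj v p) (hvm : G.Adj v m) : False := by
  have hm' : m ∈ A ((i + 2) + 3) := by
    rw [(by decide : ∀ k : ZMod 7, (k + 2) + 3 = k + 5) i]; exact hm
  refine h5 (mk_c5 (a := v) (b := p) (c := x (i + 3)) (d := x (i + 4)) (e := m)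
    hvp
    (adjx hx hA hp (Or.inr ((by decide : ∀ k : ZMod 7, k + 3 = (k + 2) + 1) i ▸ rfl)))
    (hxadj (j := i + 3) (k := i + 4) hx (Or.inr ((by decide : ∀ k : ZMod 7, (k+4) - (k+3) = 1) i)))
    ((adjx hx hA hm (Or.inl ((by decide : ∀ k : ZMod 7, k + 4 = (k + 5) + 6) i ▸ rfl))).symm)
    hvm ?_ ?_ ?_ ?_ ?_ ?_ ?_ ?_ ?_ ?_)
  -- (0,2) v vs x(i+3)
  · exact nadjx hx hA hv ((by decide : ∀ k : ZMod 7,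
      ¬ (k + 3 = k + 6 ∨ k + 3 = k ∨ k + 3 = k + 1)) i)
  · exact neqx hx hA hv ((by decide : ∀ k : ZMod 7, k + 3 ≠ k) i)
  -- (0,3) v vs x(i+4)
  · exact nadjx hx hA hv ((by decide : ∀ k : ZMod 7,
      ¬ (k + 4 = k + 6 ∨ k + 4 = k ∨ k + 4 = k + 1)) i)
  · exact neqx hx hA hv ((by decide : ∀ k : ZMod 7, k + 4 ≠ k) i)
  -- (1,3) p vs x(i+4)
  · exact nadjx hx hA hp ((by decide : ∀ k : ZMod 7,
      ¬ (k + 4 = (k+2) + 6 ∨ k + 4 = k + 2 ∨ k + 4 = (k+2) + 1)) i)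
  · exact neqx hx hA hp ((by decide : ∀ k : ZMod 7, k + 4 ≠ k + 2) i)
  -- (1,4) p vs m
  · exact anti3A hx hA h4 hp hm'
  · exact aneq hx hA hp hm ((by decide : ∀ k : ZMod 7, k + 2 ≠ k + 5) i)
  -- (2,4) x(i+3) vs m
  · exact fun h => (nadjx hx hA hm ((by decide : ∀ k : ZMod 7,
      ¬ (k + 3 = (k+5) + 6 ∨ k + 3 = k + 5 ∨ k + 3 = (k+5) + 1)) i)) h.symm
  · exact (neqx hx hA hm ((by decide : ∀ k : ZMod 7, k + 3 ≠ k + 5) i)).symm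

private lemma K3A (h4 : Paper.Free G (cycG 4)) (h5 : Paper.Free G (cycG 5)) (h7 : Paper.Free G (pathG 7))
    {u p v q : V} {i : ZMod 7}
    (hu : u ∈ A i) (hp : p ∈ A (i + 2)) (hup : G.Adj u p)
    (hv : v ∈ A (i + 3)) (hq : q ∈ A (i + 5)) (hvq : G.Adj v q) : False := by
  by_cases huq : G.Adj u q
  · exact nobothA hx hA h4 h5 hu hp hq hup huq
  have hv' : v ∈ A ((i + 2) + 1) := by
    rw [(by decide : ∀ k : ZMod 7, (k + 2) + 1 = k + 3) i]; exact hv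
  have hq' : q ∈ A ((i + 2) + 3) := by
    rw [(by decide : ∀ k : ZMod 7, (k + 2) + 3 = k + 5) i]; exact hq
  have hu' : u ∈ A ((i + 6) + 1) := by
    rw [(by decide : ∀ k : ZMod 7, (k + 6) + 1 = k) i]; exact hu
  refine h5 (mk_c5 (a := x (i + 6)) (b := u) (c := p) (d := v) (e := q)
    ((adjx hx hA hu (Or.inl rfl)).symm)
    hup
    (complA hx hA h7 hp hv')
    hvq
    ((adjx hx hA hq (Or.inr ((by decide : ∀ k : ZMod 7, k + 6 = (k + 5) + 1) i ▸ rfl))).symm)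
    ?_ ?_ ?_ ?_ ?_ ?_ ?_ ?_ ?_ ?_)
  -- (0,2) x(i+6) vs p
  · exact fun h => (nadjx hx hA hp ((by decide : ∀ k : ZMod 7,
      ¬ (k + 6 = (k+2) + 6 ∨ k + 6 = k + 2 ∨ k + 6 = (k+2) + 1)) i)) h.symm
  · exact (neqx hx hA hp ((by decide : ∀ k : ZMod 7, k + 6 ≠ k + 2) i)).symm
  -- (0,3) x(i+6) vs v
  · exact fun h => (nadjx hx hA hv ((by decide : ∀ k : ZMod 7,
      ¬ (k + 6 = (k+3) + 6 ∨ k + 6 = k + 3 ∨ k + 6 = (k+3) + 1)) i)) h.symm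
  · exact (neqx hx hA hv ((by decide : ∀ k : ZMod 7, k + 6 ≠ k + 3) i)).symm
  -- (1,3) u vs v
  · exact anti3A hx hA h4 hu hv
  · exact aneq hx hA hu hv ((by decide : ∀ k : ZMod 7, k ≠ k + 3) i)
  -- (1,4) u vs q
  · exact huq
  · exact aneq hx hA hu hq ((by decide : ∀ k : ZMod 7, k ≠ k + 5) i)
  -- (2,4) p vs q
  · exact anti3A hx hA h4 hp hq'
  · exact aneq hx hA hp hq ((by decide : ∀ k : ZMod 7, k + 2 ≠ k + 5) i)

end

end Stmt12Aux

namespace Stmt12Aux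

private lemma arc7 (e : ZMod 7 → Prop) (h : ∀ i, ¬ (e i ∧ e (i + 3))) :
    ∃ s : ZMod 7, ¬ e (s + 1) ∧ ¬ e (s + 2) ∧ ¬ e (s + 3) ∧ ¬ e (s + 4) := by
  classical
  have key : ∀ b : ZMod 7 → Bool, (∀ i, ¬ (b i = true ∧ b (i + 3) = true)) →
      ∃ s, b (s + 1) = false ∧ b (s + 2) = false ∧ b (s + 3) = false ∧ b (s + 4) = false := by
    set_option maxRecDepth 10000 in decide
  obtain ⟨s, h1, h2, h3, h4⟩ := key (fun i => decide (e i))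
    (fun i hi => h i ⟨of_decide_eq_true hi.1, of_decide_eq_true hi.2⟩)
  exact ⟨s, of_decide_eq_false h1, of_decide_eq_false h2,
    of_decide_eq_false h3, of_decide_eq_false h4⟩

section

variable {V : Type*} {G : SimpleGraph V} {x : ZMod 7 → V} {A : ZMod 7 → Set V}
  (hx : IsHole7 G x)
  (hA : ∀ i : ZMod 7, A i =
      {v : V | {w : V | w = v ∨ G.Adj v w} ∩ Set.range x = {x (i - 1), x i, x (i + 1)}})

include hx hA

/-- If the `A (i+2)`-neighbourhood of `u` is contained in that of `v`, then the closed
neighbourhood of `u` is contained in that of `v` (both in `A i`, anticomplete to `A (i+5)`). -/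
private lemma chain_sub_plus (h4 : Paper.Free G (cycG 4)) (h7 : Paper.Free G (pathG 7))
    {u v : V} {i : ZMod 7} (hu : u ∈ A i) (hv : v ∈ A i)
    (hu2 : ∀ w ∈ A (i + 5), ¬ G.Adj u w)
    (hsub : ∀ p ∈ A (i + 2), G.Adj u p → G.Adj v p) :
    cnbr G (⋃ k, A k) u ⊆ cnbr G (⋃ k, A k) v := by
  rintro w ⟨hwS, hwu⟩
  refine ⟨hwS, ?_⟩
  rw [Set.mem_iUnion] at hwS
  obtain ⟨j, hwj⟩ := hwS
  rcases (by decide : ∀ i j : ZMod 7, j = i ∨ j = i + 1 ∨ j = i + 2 ∨ j = i + 3 ∨ j = i + 4 ∨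
      j = i + 5 ∨ j = i + 6) i j with h | h | h | h | h | h | h <;> rw [h] at hwj
  · by_cases hwv : w = v
    · exact Or.inl hwv
    · exact Or.inr ((cliqueA hx hA h4 i hv hwj (Ne.symm hwv)))
  · exact Or.inr (complA hx hA h7 hv hwj)
  · have hne : w ≠ u := (aneq hx hA hu hwj ((by decide : ∀ k : ZMod 7, k ≠ k + 2) i)).symm
    rcases hwu with h | h
    · exact absurd h hne
    · exact Or.inr (hsub w hwj h)
  · exfalso
    have hne : w ≠ u := (aneq hx hA hu hwj ((by decide : ∀ k : ZMod 7, k ≠ k + 3) i)).symm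
    rcases hwu with h | h
    · exact hne h
    · exact anti3A hx hA h4 hu hwj h
  · exfalso
    have hu' : u ∈ A ((i + 4) + 3) := by
      rw [(by decide : ∀ k : ZMod 7, (k + 4) + 3 = k) i]; exact hu
    have hne : w ≠ u := (aneq hx hA hu hwj ((by decide : ∀ k : ZMod 7, k ≠ k + 4) i)).symm
    rcases hwu with h | h
    · exact hne h
    · exact anti3A hx hA h4 hwj hu' h.symm
  · exfalso
    have hne : w ≠ u := (aneq hx hA hu hwj ((by decide : ∀ k : ZMod 7, k ≠ k + 5) i)).symm
    rcases hwu with h | h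
    · exact hne h
    · exact hu2 w hwj h
  · have hv' : v ∈ A ((i + 6) + 1) := by
      rw [(by decide : ∀ k : ZMod 7, (k + 6) + 1 = k) i]; exact hv
    exact Or.inr (complA hx hA h7 hwj hv').symm

private lemma chain_sub_minus (h4 : Paper.Free G (cycG 4)) (h7 : Paper.Free G (pathG 7))
    {u v : V} {i : ZMod 7} (hu : u ∈ A i) (hv : v ∈ A i)
    (hu2 : ∀ w ∈ A (i + 2), ¬ G.Adj u w)
    (hsub : ∀ p ∈ A (i + 5), G.Adj u p → G.Adj v p) :
    cnbr G (⋃ k, A k) u ⊆ cnbr G (⋃ k, A k) v := by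
  rintro w ⟨hwS, hwu⟩
  refine ⟨hwS, ?_⟩
  rw [Set.mem_iUnion] at hwS
  obtain ⟨j, hwj⟩ := hwS
  rcases (by decide : ∀ i j : ZMod 7, j = i ∨ j = i + 1 ∨ j = i + 2 ∨ j = i + 3 ∨ j = i + 4 ∨
      j = i + 5 ∨ j = i + 6) i j with h | h | h | h | h | h | h <;> rw [h] at hwj
  · by_cases hwv : w = v
    · exact Or.inl hwv
    · exact Or.inr ((cliqueA hx hA h4 i hv hwj (Ne.symm hwv)))
  · exact Or.inr (complA hx hA h7 hv hwj)
  · exfalso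
    have hne : w ≠ u := (aneq hx hA hu hwj ((by decide : ∀ k : ZMod 7, k ≠ k + 2) i)).symm
    rcases hwu with h | h
    · exact hne h
    · exact hu2 w hwj h
  · exfalso
    have hne : w ≠ u := (aneq hx hA hu hwj ((by decide : ∀ k : ZMod 7, k ≠ k + 3) i)).symm
    rcases hwu with h | h
    · exact hne h
    · exact anti3A hx hA h4 hu hwj h
  · exfalso
    have hu' : u ∈ A ((i + 4) + 3) := by
      rw [(by decide : ∀ k : ZMod 7, (k + 4) + 3 = k) i]; exact hu
    have hne : w ≠ u := (aneq hx hA hu hwj ((by decide : ∀ k : ZMod 7, k ≠ k + 4) i)).symm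
    rcases hwu with h | h
    · exact hne h
    · exact anti3A hx hA h4 hwj hu' h.symm
  · have hne : w ≠ u := (aneq hx hA hu hwj ((by decide : ∀ k : ZMod 7, k ≠ k + 5) i)).symm
    rcases hwu with h | h
    · exact absurd h hne
    · exact Or.inr (hsub w hwj h)
  · have hv' : v ∈ A ((i + 6) + 1) := by
      rw [(by decide : ∀ k : ZMod 7, (k + 6) + 1 = k) i]; exact hv
    exact Or.inr (complA hx hA h7 hwj hv').symm

end

end Stmt12Aux

theorem statement_12 {V : Type*} [Fintype V] (G : SimpleGraph V)
    (h7 : Paper.Free G (pathG 7)) (h4 : Paper.Free G (cycG 4)) (h5 : Paper.Free G (cycG 5))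
    (x : ZMod 7 → V) (hx : IsHole7 G x) (A : ZMod 7 → Set V)
    (hA : ∀ i : ZMod 7, A i =
      {v : V | {w : V | w = v ∨ G.Adj v w} ∩ Set.range x = {x (i - 1), x i, x (i + 1)}}) :
    IsGoodPartitionOn G (⋃ i, A i) A := by
  classical
  set e : ZMod 7 → Prop := fun t => ∃ u ∈ A t, ∃ w ∈ A (t + 2), G.Adj u w with he
  have hK : ∀ t, ¬ (e t ∧ e (t + 3)) := by
    rintro t ⟨⟨u, hu, p, hp, hup⟩, ⟨v, hv, q, hq, hvq⟩⟩
    rw [(by decide : ∀ k : ZMod 7, (k + 3) + 2 = k + 5) t] at hq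
    exact Stmt12Aux.K3A hx hA h4 h5 h7 hu hp hup hv hq hvq
  obtain ⟨s, hs1, hs2, hs3, hs4⟩ := Stmt12Aux.arc7 e hK
  have plus_empty : ∀ t, ¬ e t → braceletPlus G A t = ∅ := by
    intro t ht
    rw [Set.eq_empty_iff_forall_notMem]
    rintro v ⟨hv, -, hvp⟩
    exact ht ⟨v, hv, hvp⟩
  have minus_empty : ∀ t, ¬ e (t + 5) → braceletMinus G A t = ∅ := by
    intro t ht
    rw [Set.eq_empty_iff_forall_notMem]
    rintro v ⟨hv, -, w, hw, hvw⟩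
    rw [(by decide : ∀ k : ZMod 7, k - 2 = k + 5) t] at hw
    refine ht ⟨w, hw, v, ?_, hvw.symm⟩
    rw [(by decide : ∀ k : ZMod 7, (k + 5) + 2 = k) t]; exact hv
  refine ⟨s, rfl, fun i j h => Stmt12Aux.disjA hx hA i j h,
    ?_, ?_, ?_, ?_, ?_, ?_, ?_, ?_, ?_, ?_, ?_, ?_, ?_⟩
  · -- (I)
    intro i
    refine ⟨⟨x i, Stmt12Aux.xmem hx hA i⟩, Stmt12Aux.cliqueA hx hA h4 i, ?_, ?_⟩
    · rintro a ha b (hb | hb)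
      · rw [(by decide : ∀ k : ZMod 7, k - 1 = k + 6) i] at hb
        have ha' : a ∈ A ((i + 6) + 1) := by
          rw [(by decide : ∀ k : ZMod 7, (k + 6) + 1 = k) i]; exact ha
        exact (Stmt12Aux.complA hx hA h7 hb ha').symm
      · exact Stmt12Aux.complA hx hA h7 ha hb
    · rintro a ha b (hb | hb)
      · rw [(by decide : ∀ k : ZMod 7, k - 3 = k + 4) i] at hb
        have ha' : a ∈ A ((i + 4) + 3) := by
          rw [(by decide : ∀ k : ZMod 7, (k + 4) + 3 = k) i]; exact ha
        exact fun hadj => Stmt12Aux.anti3A hx hA h4 hb ha' hadj.symm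
      · exact Stmt12Aux.anti3A hx hA h4 ha hb
  · -- (II)(a)-(c)
    intro i
    ext v
    constructor
    · intro hv
      by_cases hp : ∃ w ∈ A (i + 2), G.Adj v w
      · by_cases hm : ∃ w ∈ A (i - 2), G.Adj v w
        · exfalso
          obtain ⟨p, hpm, hvp⟩ := hp
          obtain ⟨m, hmm, hvm⟩ := hm
          rw [(by decide : ∀ k : ZMod 7, k - 2 = k + 5) i] at hmm
          exact Stmt12Aux.nobothA hx hA h4 h5 hv hpm hmm hvp hvm
        · push_neg at hm
          exact Or.inl (Or.inr ⟨hv, hm, hp⟩)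
      · push_neg at hp
        by_cases hm : ∃ w ∈ A (i - 2), G.Adj v w
        · exact Or.inr ⟨hv, hp, hm⟩
        · push_neg at hm
          refine Or.inl (Or.inl ⟨hv, ?_⟩)
          rintro w (hw | hw)
          · exact hm w hw
          · exact hp w hw
    · rintro ((h | h) | h)
      · exact h.1
      · exact h.1
      · exact h.1
  · -- chains for plus
    intro i u hu v hv
    by_cases huv : u = v
    · subst huv; exact Or.inl (fun w hw => hw)
    obtain ⟨hu1, hu2, -⟩ := hu
    obtain ⟨hv1, hv2, -⟩ := hv
    rw [(by decide : ∀ k : ZMod 7, k - 2 = k + 5) i] at hu2 hv2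
    by_cases hc : ∀ p ∈ A (i + 2), G.Adj u p → G.Adj v p
    · exact Or.inl (Stmt12Aux.chain_sub_plus hx hA h4 h7 hu1 hv1 hu2 hc)
    · push_neg at hc
      obtain ⟨p, hp, hup, hvp⟩ := hc
      refine Or.inr (Stmt12Aux.chain_sub_plus hx hA h4 h7 hv1 hu1 hv2 ?_)
      intro q hq hvq
      by_contra huq
      have hpq : p ≠ q := fun h => hvp (by rw [h]; exact hvq)
      exact h4 (mk_c4 (a := u) (b := p) (c := q) (d := v)
        hup
        (Stmt12Aux.cliqueA hx hA h4 (i + 2) hp hq hpq)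
        hvq.symm
        (Stmt12Aux.cliqueA hx hA h4 i hu1 hv1 huv)
        huq
        (Stmt12Aux.aneq hx hA hu1 hq ((by decide : ∀ k : ZMod 7, k ≠ k + 2) i))
        (fun h => hvp h.symm)
        ((Stmt12Aux.aneq hx hA hv1 hp ((by decide : ∀ k : ZMod 7, k ≠ k + 2) i)).symm))
  · -- chains for minus
    intro i u hu v hv
    by_cases huv : u = v
    · subst huv; exact Or.inl (fun w hw => hw)
    obtain ⟨hu1, hu2, -⟩ := hu
    obtain ⟨hv1, hv2, -⟩ := hv
    by_cases hc : ∀ p ∈ A (i + 5), G.Adj u p → G.Adj v p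
    · exact Or.inl (Stmt12Aux.chain_sub_minus hx hA h4 h7 hu1 hv1 hu2 hc)
    · push_neg at hc
      obtain ⟨p, hp, hup, hvp⟩ := hc
      refine Or.inr (Stmt12Aux.chain_sub_minus hx hA h4 h7 hv1 hu1 hv2 ?_)
      intro q hq hvq
      by_contra huq
      have hpq : p ≠ q := fun h => hvp (by rw [h]; exact hvq)
      exact h4 (mk_c4 (a := u) (b := p) (c := q) (d := v)
        hup
        (Stmt12Aux.cliqueA hx hA h4 (i + 5) hp hq hpq)
        hvq.symm
        (Stmt12Aux.cliqueA hx hA h4 i hu1 hv1 huv)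
        huq
        (Stmt12Aux.aneq hx hA hu1 hq ((by decide : ∀ k : ZMod 7, k ≠ k + 5) i))
        (fun h => hvp h.symm)
        ((Stmt12Aux.aneq hx hA hv1 hp ((by decide : ∀ k : ZMod 7, k ≠ k + 5) i)).symm))
  · -- (II)(f)
    intro i
    refine ⟨x i, Stmt12Aux.xmem hx hA i, ⟨x (i - 2), Stmt12Aux.xmem hx hA (i - 2), ?_⟩,
      ⟨x (i + 2), Stmt12Aux.xmem hx hA (i + 2), ?_⟩⟩
    · exact Stmt12Aux.hxnadj hx ((by decide : ∀ k : ZMod 7, k - (k - 2) ≠ 1) i)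
        ((by decide : ∀ k : ZMod 7, (k - 2) - k ≠ 1) i)
    · exact Stmt12Aux.hxnadj hx ((by decide : ∀ k : ZMod 7, k - (k + 2) ≠ 1) i)
        ((by decide : ∀ k : ZMod 7, (k + 2) - k ≠ 1) i)
  · rw [(by decide : ∀ k : ZMod 7, k - 3 = k + 4) s]
    exact plus_empty _ hs4
  · rw [(by decide : ∀ k : ZMod 7, k - 3 = k + 4) s]
    refine minus_empty _ ?_
    rw [(by decide : ∀ k : ZMod 7, (k + 4) + 5 = k + 2) s]
    exact hs2
  · exact plus_empty _ hs3
  · refine minus_empty _ ?_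
    rw [(by decide : ∀ k : ZMod 7, (k + 3) + 5 = k + 1) s]
    exact hs1
  · rw [(by decide : ∀ k : ZMod 7, k - 2 = k + 5) s]
    refine minus_empty _ ?_
    rw [(by decide : ∀ k : ZMod 7, (k + 5) + 5 = k + 3) s]
    exact hs3
  · exact plus_empty _ hs2
  · rw [(by decide : ∀ k : ZMod 7, k - 1 = k + 6) s]
    refine minus_empty _ ?_
    rw [(by decide : ∀ k : ZMod 7, (k + 6) + 5 = k + 4) s]
    exact hs4
  · exact plus_empty _ hs1
end

section
/- Let R be a lantern. Then R is P_7-free, every hole in R has length exactly six, and R does not admit a clique-cutset. -/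
open SimpleGraph

open Paper

namespace LanternAux

open Paper

variable {V : Type*}

structure LP (G : SimpleGraph V) (r : ℕ) (A D : Set V) (Bs Cs : Fin r → Set V) : Prop where
  hU : ∀ v : V, v ∈ A ∨ v ∈ D ∨ (∃ i, v ∈ Bs i) ∨ (∃ i, v ∈ Cs i)
  hAD : Disjoint A D
  hABd : ∀ i, Disjoint A (Bs i)
  hACd : ∀ i, Disjoint A (Cs i)
  hDBd : ∀ i, Disjoint D (Bs i)
  hDCd : ∀ i, Disjoint D (Cs i)
  hBCd : ∀ i j, Disjoint (Bs i) (Cs j)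
  hBBd : ∀ i j, i ≠ j → Disjoint (Bs i) (Bs j)
  hCCd : ∀ i j, i ≠ j → Disjoint (Cs i) (Cs j)
  hAne : A.Nonempty
  hDne : D.Nonempty
  hBne : ∀ i, (Bs i).Nonempty
  hCne : ∀ i, (Cs i).Nonempty
  hAcl : G.IsClique A
  hDcl : G.IsClique D
  hBcl : ∀ i, G.IsClique (Bs i)
  hCcl : ∀ i, G.IsClique (Cs i)
  hADa : AnticompleteTo G A D
  hABc : ∀ i, CompleteTo G A (Bs i)
  hACa : ∀ i, AnticompleteTo G A (Cs i)
  hDCc : ∀ i, CompleteTo G D (Cs i)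
  hDBa : ∀ i, AnticompleteTo G D (Bs i)
  hchainB : ∀ i : Fin r, i.val = 0 → ∀ u ∈ Bs i, ∀ v ∈ Bs i,
    nbrIn G (Cs i) u ⊆ nbrIn G (Cs i) v ∨ nbrIn G (Cs i) v ⊆ nbrIn G (Cs i) u
  hchainC : ∀ i : Fin r, i.val = 0 → ∀ u ∈ Cs i, ∀ v ∈ Cs i,
    nbrIn G (Bs i) u ⊆ nbrIn G (Bs i) v ∨ nbrIn G (Bs i) v ⊆ nbrIn G (Bs i) u
  htopB : ∀ i : Fin r, i.val = 0 → ∃ u ∈ Bs i, ∀ y ∈ Cs i, G.Adj u y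
  htopC : ∀ i : Fin r, i.val = 0 → ∃ u ∈ Cs i, ∀ y ∈ Bs i, G.Adj u y
  hcomp : ∀ i : Fin r, i.val ≠ 0 → CompleteTo G (Bs i) (Cs i)
  hanti : ∀ i j, i ≠ j → AnticompleteTo G (Bs i ∪ Cs i) (Bs j ∪ Cs j)

variable {G : SimpleGraph V} {r : ℕ} {A D : Set V} {Bs Cs : Fin r → Set V}

theorem toLP (hp : IsLanternPartitionOn G Set.univ r A D Bs Cs) : LP G r A D Bs Cs := by
  obtain ⟨h1, h2, h3, h4, h5, h6, h7, h8, h9, h10, h11, h12, h13, h14, h15, h16, h17⟩ := hp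
  refine ⟨?_, h2, fun i => (h3 i).1, fun i => (h3 i).2.1, fun i => (h3 i).2.2.1,
    fun i => (h3 i).2.2.2, h4, fun i j hij => (h5 i j hij).1, fun i j hij => (h5 i j hij).2,
    h6, h7, fun i => (h8 i).1, fun i => (h8 i).2, h9, h10, fun i => (h11 i).1,
    fun i => (h11 i).2, h12, fun i => (h13 i).1, fun i => (h13 i).2,
    fun i => (h14 i).1, fun i => (h14 i).2,
    fun i hi => ((h15 i hi).1).1, fun i hi => ((h15 i hi).2).1,
    fun i hi => ((h15 i hi).1).2, fun i hi => ((h15 i hi).2).2, h16, h17⟩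
  intro v
  have hv : v ∈ (A ∪ D ∪ (⋃ i, Bs i) ∪ (⋃ i, Cs i)) := by rw [h1]; trivial
  simp only [Set.mem_union, Set.mem_iUnion] at hv
  tauto

theorem LP.symm (h : LP G r A D Bs Cs) : LP G r D A Cs Bs where
  hU v := by rcases h.hU v with hv | hv | hv | hv <;> tauto
  hAD := h.hAD.symm
  hABd := h.hDCd
  hACd := h.hDBd
  hDBd := h.hACd
  hDCd := h.hABd
  hBCd i j := (h.hBCd j i).symm
  hBBd := h.hCCd
  hCCd := h.hBBd
  hAne := h.hDne
  hDne := h.hAne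
  hBne := h.hCne
  hCne := h.hBne
  hAcl := h.hDcl
  hDcl := h.hAcl
  hBcl := h.hCcl
  hCcl := h.hBcl
  hADa x hx y hy hadj := h.hADa y hy x hx hadj.symm
  hABc := h.hDCc
  hACa := h.hDBa
  hDCc := h.hABc
  hDBa := h.hACa
  hchainB := h.hchainC
  hchainC := h.hchainB
  htopB := h.htopC
  htopC := h.htopB
  hcomp i hi x hx y hy := (h.hcomp i hi y hy x hx).symm
  hanti i j hij x hx y hy := h.hanti i j hij x (Or.symm hx) y (Or.symm hy)

/-- forced non-adjacency between different B/C groups -/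
theorem LP.nadjBC (h : LP G r A D Bs Cs) {i j : Fin r} (hij : i ≠ j) {b c : V}
    (hb : b ∈ Bs i) (hc : c ∈ Cs j) : ¬ G.Adj b c :=
  h.hanti i j hij b (Or.inl hb) c (Or.inr hc)

theorem LP.nadjBB (h : LP G r A D Bs Cs) {i j : Fin r} (hij : i ≠ j) {b c : V}
    (hb : b ∈ Bs i) (hc : c ∈ Bs j) : ¬ G.Adj b c :=
  h.hanti i j hij b (Or.inl hb) c (Or.inl hc)

theorem LP.nadjCC (h : LP G r A D Bs Cs) {i j : Fin r} (hij : i ≠ j) {b c : V}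
    (hb : b ∈ Cs i) (hc : c ∈ Cs j) : ¬ G.Adj b c :=
  h.hanti i j hij b (Or.inr hb) c (Or.inr hc)

/-- every vertex of `Bs i` has a neighbour in `Cs i` -/
theorem LP.topCnbr (h : LP G r A D Bs Cs) (i : Fin r) {b : V} (hb : b ∈ Bs i) :
    ∃ c ∈ Cs i, G.Adj b c := by
  by_cases hi : i.val = 0
  · obtain ⟨c, hc, hcall⟩ := h.htopC i hi
    exact ⟨c, hc, (hcall b hb).symm⟩
  · obtain ⟨c, hc⟩ := h.hCne i
    exact ⟨c, hc, h.hcomp i hi b hb c hc⟩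

end LanternAux

namespace LanternAux

open Paper

variable {V : Type*} {G : SimpleGraph V} {r : ℕ} {A D : Set V} {Bs Cs : Fin r → Set V}

/-- No induced `P₇` containing a vertex of `A` but no vertex of `D`. -/
theorem p7_auxA (h : LP G r A D Bs Cs) (f : Fin 7 ↪ V)
    (hadj : ∀ p q : Fin 7, G.Adj (f p) (f q) ↔ (p.val + 1 = q.val ∨ q.val + 1 = p.val))
    (pa : Fin 7) (hpa : f pa ∈ A) (hnD : ∀ p, f p ∉ D) : False := by
  have hne : ∀ p q : Fin 7, p ≠ q → f p ≠ f q := fun p q hpq he => hpq (f.injective he)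
  have hcl : ∀ (S : Set V), G.IsClique S → ∀ p q : Fin 7, f p ∈ S → f q ∈ S → p ≠ q →
      (p.val + 1 = q.val ∨ q.val + 1 = p.val) := fun S hS p q hp hq hpq =>
    (hadj p q).mp (hS hp hq (hne p q hpq))
  -- every position outside the window of `pa` carries a `C`-vertex
  have hCpos : ∀ p : Fin 7, ¬(p.val + 1 = pa.val ∨ pa.val + 1 = p.val ∨ p.val = pa.val) →
      ∃ i, f p ∈ Cs i := by
    intro p hw
    rcases h.hU (f p) with hp | hp | ⟨i, hp⟩ | ⟨i, hp⟩
    · exfalso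
      have hppa : p ≠ pa := fun he => hw (Or.inr (Or.inr (by rw [he])))
      rcases hcl A h.hAcl p pa hp hpa hppa with hc | hc
      · exact hw (Or.inl hc)
      · exact hw (Or.inr (Or.inl hc))
    · exact absurd hp (hnD p)
    · exfalso
      have : G.Adj (f pa) (f p) := h.hABc i (f pa) hpa (f p) hp
      rcases (hadj pa p).mp this with hc | hc
      · exact hw (Or.inr (Or.inl hc))
      · exact hw (Or.inl hc)
    · exact ⟨i, hp⟩
  -- adjacent C-positions share their index
  have hCCadj : ∀ (p q : Fin 7) (i j : Fin r), f p ∈ Cs i → f q ∈ Cs j →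
      G.Adj (f p) (f q) → i = j := by
    intro p q i j hp hq ha
    by_contra hij
    exact h.nadjCC hij hp hq ha
  by_cases h3 : pa.val = 3
  · -- special middle case
    obtain ⟨i, h0⟩ := hCpos ⟨0, by omega⟩ (by simp; omega)
    obtain ⟨i1, h1⟩ := hCpos ⟨1, by omega⟩ (by simp; omega)
    obtain ⟨j1, h5⟩ := hCpos ⟨5, by omega⟩ (by simp; omega)
    obtain ⟨j, h6⟩ := hCpos ⟨6, by omega⟩ (by simp; omega)
    have hi1 : i1 = i :=
      hCCadj ⟨1, by omega⟩ ⟨0, by omega⟩ i1 i h1 h0 ((hadj _ _).mpr (Or.inr rfl))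
    rw [hi1] at h1
    have hj1 : j1 = j :=
      hCCadj ⟨5, by omega⟩ ⟨6, by omega⟩ j1 j h5 h6 ((hadj _ _).mpr (Or.inl rfl))
    rw [hj1] at h5
    have hijne : i ≠ j := by
      rintro rfl
      rcases hcl (Cs i) (h.hCcl i) ⟨1, by omega⟩ ⟨5, by omega⟩ h1 h5 (by intro he; rw [Fin.mk.injEq] at he; omega) with hc | hc <;>
        simp at hc
    have hpa3 : pa = ⟨3, by omega⟩ := Fin.ext h3
    -- classify position 2
    have hb2 : f ⟨2, by omega⟩ ∈ Bs i ∧ i.val = 0 := by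
      rcases h.hU (f ⟨2, by omega⟩) with hp | hp | ⟨k, hp⟩ | ⟨k, hp⟩
      · exact absurd ((hadj ⟨1, by omega⟩ ⟨2, by omega⟩).mpr (Or.inl rfl))
          (h.hACa i (f ⟨2, by omega⟩) hp (f ⟨1, by omega⟩) h1 ∘ SimpleGraph.Adj.symm)
      · exact absurd hp (hnD _)
      · have hk : k = i := by
          by_contra hk
          exact h.nadjBC hk hp h1 ((hadj ⟨2, by omega⟩ ⟨1, by omega⟩).mpr (Or.inr rfl))
        subst hk
        refine ⟨hp, ?_⟩
        by_contra hk0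
        have : G.Adj (f ⟨2, by omega⟩) (f ⟨0, by omega⟩) := h.hcomp k hk0 _ hp _ h0
        rcases (hadj _ _).mp this with hc | hc <;> simp at hc
      · exfalso
        have : G.Adj (f ⟨2, by omega⟩) (f pa) := (hadj _ _).mpr (Or.inl (by rw [hpa3]))
        exact h.hACa k (f pa) hpa (f ⟨2, by omega⟩) hp this.symm
    -- classify position 4
    have hb4 : f ⟨4, by omega⟩ ∈ Bs j ∧ j.val = 0 := by
      rcases h.hU (f ⟨4, by omega⟩) with hp | hp | ⟨k, hp⟩ | ⟨k, hp⟩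
      · exact absurd ((hadj ⟨4, by omega⟩ ⟨5, by omega⟩).mpr (Or.inl rfl))
          (h.hACa j (f ⟨4, by omega⟩) hp (f ⟨5, by omega⟩) h5)
      · exact absurd hp (hnD _)
      · have hk : k = j := by
          by_contra hk
          exact h.nadjBC hk hp h5 ((hadj ⟨4, by omega⟩ ⟨5, by omega⟩).mpr (Or.inl rfl))
        subst hk
        refine ⟨hp, ?_⟩
        by_contra hk0
        have : G.Adj (f ⟨4, by omega⟩) (f ⟨6, by omega⟩) := h.hcomp k hk0 _ hp _ h6
        rcases (hadj _ _).mp this with hc | hc <;> simp at hc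
      · exfalso
        have : G.Adj (f pa) (f ⟨4, by omega⟩) := (hadj _ _).mpr (Or.inl (by rw [hpa3]))
        exact h.hACa k (f pa) hpa (f ⟨4, by omega⟩) hp this
    exact hijne (Fin.ext (by rw [hb2.2, hb4.2]))
  · -- three consecutive positions outside the window
    obtain ⟨t, ht4, hout⟩ : ∃ t : ℕ, t + 2 ≤ 6 ∧
        ∀ s, t ≤ s → s ≤ t + 2 → ¬(s + 1 = pa.val ∨ pa.val + 1 = s ∨ s = pa.val) := by
      have hpa7 : pa.val < 7 := pa.isLt
      rcases le_or_gt pa.val 2 with h' | h'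
      · exact ⟨4, by omega, by intro s h1 h2; omega⟩
      · exact ⟨0, by omega, by intro s h1 h2; omega⟩
    obtain ⟨i0, h0⟩ := hCpos ⟨t, by omega⟩ (hout t le_rfl (by omega))
    obtain ⟨i1, h1⟩ := hCpos ⟨t + 1, by omega⟩ (hout (t + 1) (by omega) (by omega))
    obtain ⟨i2, h2⟩ := hCpos ⟨t + 2, by omega⟩ (hout (t + 2) (by omega) le_rfl)
    have e1 : i0 = i1 := hCCadj _ _ _ _ h0 h1 ((hadj _ _).mpr (Or.inl rfl))
    have e2 : i1 = i2 := hCCadj _ _ _ _ h1 h2 ((hadj _ _).mpr (Or.inl rfl))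
    rw [e1, e2] at h0
    have hcon := hcl (Cs i2) (h.hCcl i2) ⟨t, by omega⟩ ⟨t + 2, by omega⟩ h0 h2
      (by intro he; rw [Fin.mk.injEq] at he; omega)
    simp only [Fin.val_mk] at hcon
    omega

/-- No induced `P₇` in a lantern. -/
theorem p7_main (h : LP G r A D Bs Cs) (f : Fin 7 ↪ V)
    (hadj : ∀ p q : Fin 7, G.Adj (f p) (f q) ↔ (p.val + 1 = q.val ∨ q.val + 1 = p.val)) :
    False := by
  have hne : ∀ p q : Fin 7, p ≠ q → f p ≠ f q := fun p q hpq he => hpq (f.injective he)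
  have hcl : ∀ (S : Set V), G.IsClique S → ∀ p q : Fin 7, f p ∈ S → f q ∈ S → p ≠ q →
      (p.val + 1 = q.val ∨ q.val + 1 = p.val) := fun S hS p q hp hq hpq =>
    (hadj p q).mp (hS hp hq (hne p q hpq))
  by_cases hA : ∃ p, f p ∈ A
  · by_cases hD : ∃ p, f p ∈ D
    · -- both A and D present : windows cover everything, contradiction
      obtain ⟨pa, hpa⟩ := hA
      obtain ⟨pd, hpd⟩ := hD
      have hwin : ∀ p : Fin 7,
          ((p.val + 1 = pa.val ∨ pa.val + 1 = p.val ∨ p.val = pa.val) ∨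
           (p.val + 1 = pd.val ∨ pd.val + 1 = p.val ∨ p.val = pd.val)) := by
        intro p
        rcases h.hU (f p) with hp | hp | ⟨i, hp⟩ | ⟨i, hp⟩
        · by_cases hppa : p = pa
          · exact Or.inl (Or.inr (Or.inr (by rw [hppa])))
          · rcases hcl A h.hAcl p pa hp hpa hppa with hc | hc
            · exact Or.inl (Or.inl hc)
            · exact Or.inl (Or.inr (Or.inl hc))
        · by_cases hppd : p = pd
          · exact Or.inr (Or.inr (Or.inr (by rw [hppd])))
          · rcases hcl D h.hDcl p pd hp hpd hppd with hc | hc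
            · exact Or.inr (Or.inl hc)
            · exact Or.inr (Or.inr (Or.inl hc))
        · rcases (hadj pa p).mp (h.hABc i (f pa) hpa (f p) hp) with hc | hc
          · exact Or.inl (Or.inr (Or.inl hc))
          · exact Or.inl (Or.inl hc)
        · rcases (hadj pd p).mp (h.hDCc i (f pd) hpd (f p) hp) with hc | hc
          · exact Or.inr (Or.inr (Or.inl hc))
          · exact Or.inr (Or.inl hc)
      have hdec : ∀ pa pd : Fin 7, ∃ p : Fin 7,
          ¬((p.val + 1 = pa.val ∨ pa.val + 1 = p.val ∨ p.val = pa.val) ∨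
            (p.val + 1 = pd.val ∨ pd.val + 1 = p.val ∨ p.val = pd.val)) := by decide
      obtain ⟨p, hp⟩ := hdec pa pd
      exact hp (hwin p)
    · obtain ⟨pa, hpa⟩ := hA
      push_neg at hD
      exact p7_auxA h f hadj pa hpa hD
  · by_cases hD : ∃ p, f p ∈ D
    · obtain ⟨pd, hpd⟩ := hD
      push_neg at hA
      exact p7_auxA h.symm f hadj pd hpd hA
    · -- neither A nor D: all vertices in one index group
      push_neg at hA; push_neg at hD
      obtain ⟨i, hi⟩ : ∃ i, f ⟨0, by omega⟩ ∈ Bs i ∨ f ⟨0, by omega⟩ ∈ Cs i := by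
        rcases h.hU (f ⟨0, by omega⟩) with hp | hp | ⟨i, hp⟩ | ⟨i, hp⟩
        · exact absurd hp (hA _)
        · exact absurd hp (hD _)
        · exact ⟨i, Or.inl hp⟩
        · exact ⟨i, Or.inr hp⟩
      have hstep : ∀ p q : Fin 7, p.val + 1 = q.val → (f p ∈ Bs i ∨ f p ∈ Cs i) →
          (f q ∈ Bs i ∨ f q ∈ Cs i) := by
        intro p q hpq hp
        have hpq' : G.Adj (f p) (f q) := (hadj p q).mpr (Or.inl hpq)
        rcases h.hU (f q) with hq | hq | ⟨j, hq⟩ | ⟨j, hq⟩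
        · exact absurd hq (hA _)
        · exact absurd hq (hD _)
        · rcases eq_or_ne i j with rfl | hij
          · exact Or.inl hq
          · exact absurd hpq' (h.hanti i j hij (f p) hp (f q) (Or.inl hq))
        · rcases eq_or_ne i j with rfl | hij
          · exact Or.inr hq
          · exact absurd hpq' (h.hanti i j hij (f p) hp (f q) (Or.inr hq))
      have hall : ∀ n (hn : n < 7), f ⟨n, hn⟩ ∈ Bs i ∨ f ⟨n, hn⟩ ∈ Cs i := by
        intro n
        induction n with
        | zero => intro hn; exact hi
        | succ m ih =>
          intro hn
          exact hstep ⟨m, by omega⟩ ⟨m + 1, hn⟩ rfl (ih (by omega))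
      have h0 := hall 0 (by omega)
      have h2 := hall 2 (by omega)
      have h4 := hall 4 (by omega)
      have hbad : ∀ (S : Set V), G.IsClique S → ∀ (a b : ℕ) (ha : a < 7) (hb : b < 7),
          a + 2 ≤ b → b ≤ a + 4 → f ⟨a, ha⟩ ∈ S → f ⟨b, hb⟩ ∈ S → False := by
        intro S hS a b ha hb hab1 hab2 hfa hfb
        rcases hcl S hS ⟨a, ha⟩ ⟨b, hb⟩ hfa hfb (by intro he; rw [Fin.mk.injEq] at he; omega) with hc | hc <;>
          simp at hc <;> omega
      rcases h0 with h0 | h0 <;> rcases h2 with h2 | h2 <;> rcases h4 with h4 | h4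
      · exact hbad _ (h.hBcl i) 0 2 (by omega) (by omega) (by omega) (by omega) h0 h2
      · exact hbad _ (h.hBcl i) 0 2 (by omega) (by omega) (by omega) (by omega) h0 h2
      · exact hbad _ (h.hBcl i) 0 4 (by omega) (by omega) (by omega) (by omega) h0 h4
      · exact hbad _ (h.hCcl i) 2 4 (by omega) (by omega) (by omega) (by omega) h2 h4
      · exact hbad _ (h.hBcl i) 2 4 (by omega) (by omega) (by omega) (by omega) h2 h4
      · exact hbad _ (h.hCcl i) 0 4 (by omega) (by omega) (by omega) (by omega) h0 h4
      · exact hbad _ (h.hCcl i) 0 2 (by omega) (by omega) (by omega) (by omega) h0 h2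
      · exact hbad _ (h.hCcl i) 0 2 (by omega) (by omega) (by omega) (by omega) h0 h2

end LanternAux

namespace LanternAux

open Paper

variable {V : Type*} {G : SimpleGraph V} {r : ℕ} {A D : Set V} {Bs Cs : Fin r → Set V}

/-- No hole (of any length `k ≥ 4`) contains a vertex of `A` but no vertex of `D`. -/
theorem hole_auxA (h : LP G r A D Bs Cs) {k : ℕ} (hk : 4 ≤ k) (f : ZMod k ↪ V)
    (hadj : ∀ p q : ZMod k, G.Adj (f p) (f q) ↔ (p + 1 = q ∨ q + 1 = p))
    (pa : ZMod k) (hpa : f pa ∈ A) (hnD : ∀ p, f p ∉ D) : False := by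
  haveI : NeZero k := ⟨by omega⟩
  have hne0 : ∀ n : ℕ, 0 < n → n < k → ((n : ZMod k) ≠ 0) := by
    intro n h1 h2 h0
    have := (ZMod.natCast_eq_zero_iff n k).mp h0
    exact absurd (Nat.le_of_dvd h1 this) (by omega)
  have hcastne : ∀ a b : ℕ, a < k → b < k → a ≠ b → ((a : ZMod k) ≠ (b : ZMod k)) := by
    intro a b ha hb hab hh
    have := congrArg ZMod.val hh
    rw [ZMod.val_cast_of_lt ha, ZMod.val_cast_of_lt hb] at this
    exact hab this
  have hone : ((1 : ℕ) : ZMod k) = (1 : ZMod k) := by push_cast; ring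
  -- a vertex at position `pa + t`, `2 ≤ t ≤ k-2`, is a C-vertex
  have hCpos : ∀ t : ℕ, 2 ≤ t → t ≤ k - 2 → ∃ i, f (pa + (t : ℕ)) ∈ Cs i := by
    intro t h2t htk
    rcases h.hU (f (pa + (t : ℕ))) with hp | hp | ⟨i, hp⟩ | ⟨i, hp⟩
    · exfalso
      have hnea : pa + (t : ℕ) ≠ pa := by
        intro hh
        exact hne0 t (by omega) (by omega) (by rwa [add_eq_left] at hh)
      have := (hadj (pa + (t : ℕ)) pa).mp (h.hAcl hp hpa (fun he => hnea (f.injective he)))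
      rcases this with hc | hc
      · -- pa + t + 1 = pa
        have : ((t + 1 : ℕ) : ZMod k) = 0 := by
          have h' : pa + ((t : ZMod k) + 1) = pa + 0 := by
            rw [add_zero, ← add_assoc]; exact hc
          push_cast
          exact add_left_cancel h'
        exact hne0 (t + 1) (by omega) (by omega) this
      · -- pa + 1 = pa + t
        have : ((t : ℕ) : ZMod k) = ((1 : ℕ) : ZMod k) := by
          apply add_left_cancel (a := pa)
          rw [← hc, hone]
        exact hcastne t 1 (by omega) (by omega) (by omega) this
    · exact absurd hp (hnD _)
    · exfalso
      have := (hadj pa (pa + (t : ℕ))).mp (h.hABc i (f pa) hpa _ hp)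
      rcases this with hc | hc
      · -- pa + 1 = pa + t
        have : ((1 : ℕ) : ZMod k) = ((t : ℕ) : ZMod k) := by
          apply add_left_cancel (a := pa); rw [← hc, hone]
        exact hcastne 1 t (by omega) (by omega) (by omega) this
      · -- pa + t + 1 = pa
        have : ((t + 1 : ℕ) : ZMod k) = 0 := by
          have h' : pa + ((t : ZMod k) + 1) = pa + 0 := by
            rw [add_zero, ← add_assoc]; exact hc
          push_cast
          exact add_left_cancel h'
        exact hne0 (t + 1) (by omega) (by omega) this
    · exact ⟨i, hp⟩
  obtain ⟨i0, hi0⟩ := hCpos 2 le_rfl (by omega)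
  -- the whole run pa+2 .. pa+(k-2) lies in Cs i0
  have hrun : ∀ t : ℕ, 2 ≤ t → t ≤ k - 2 → f (pa + (t : ℕ)) ∈ Cs i0 := by
    intro t ht
    induction t, ht using Nat.le_induction with
    | base => intro _; exact hi0
    | succ n hn ih =>
      intro hnk
      obtain ⟨j, hj⟩ := hCpos (n + 1) (by omega) hnk
      have hadj' : G.Adj (f (pa + (n : ℕ))) (f (pa + ((n+1) : ℕ))) := by
        apply (hadj _ _).mpr
        left
        push_cast
        ring
      rcases eq_or_ne j i0 with rfl | hij
      · exact hj
      · exact absurd hadj'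
          (fun ha => h.nadjCC (Ne.symm hij) (ih (by omega)) hj ha)
  have hc2 : f (pa + ((2:ℕ) : ZMod k)) ∈ Cs i0 := hrun 2 le_rfl (by omega)
  have hcend : f (pa + (((k-2) : ℕ) : ZMod k)) ∈ Cs i0 := hrun (k-2) (by omega) le_rfl
  -- arithmetic facts
  have hup : ∀ n : ℕ, (pa + (n : ℕ)) + 1 = pa + ((n+1 : ℕ) : ZMod k) := by
    intro n; push_cast; ring
  have hkzero : ((k : ℕ) : ZMod k) = 0 := ZMod.natCast_self k
  have hwrap : (pa + (((k-1) : ℕ) : ZMod k)) + 1 = pa := by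
    rw [hup (k-1)]
    have : ((k - 1 + 1 : ℕ) : ZMod k) = 0 := by
      rw [show k - 1 + 1 = k by omega]; exact hkzero
    rw [this, add_zero]
  have hwrap2 : (pa + (((k-2) : ℕ) : ZMod k)) + 1 = pa + (((k-1) : ℕ) : ZMod k) := by
    rw [hup (k-2)]; congr 2; omega
  -- classify f (pa + 1)
  have hb1 : f (pa + ((1:ℕ) : ZMod k)) ∈ Bs i0 := by
    have hadj0 : G.Adj (f pa) (f (pa + ((1:ℕ) : ZMod k))) := by
      apply (hadj _ _).mpr; left; rw [hone]
    have hadj12 : G.Adj (f (pa + ((1:ℕ) : ZMod k))) (f (pa + ((2:ℕ) : ZMod k))) := by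
      apply (hadj _ _).mpr; left; exact hup 1
    rcases h.hU (f (pa + ((1:ℕ) : ZMod k))) with hp | hp | ⟨j, hp⟩ | ⟨j, hp⟩
    · exact absurd hadj12 (h.hACa i0 _ hp _ hc2)
    · exact absurd hp (hnD _)
    · rcases eq_or_ne j i0 with rfl | hij
      · exact hp
      · exact absurd hadj12 (h.nadjBC hij hp hc2)
    · exact absurd hadj0 (h.hACa j (f pa) hpa _ hp)
  -- classify f (pa + (k-1))
  have hb2 : f (pa + (((k-1) : ℕ) : ZMod k)) ∈ Bs i0 := by
    have hadj0 : G.Adj (f (pa + (((k-1) : ℕ) : ZMod k))) (f pa) := by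
      apply (hadj _ _).mpr; left; exact hwrap
    have hadj12 : G.Adj (f (pa + (((k-2) : ℕ) : ZMod k))) (f (pa + (((k-1) : ℕ) : ZMod k))) := by
      apply (hadj _ _).mpr; left; exact hwrap2
    rcases h.hU (f (pa + (((k-1) : ℕ) : ZMod k))) with hp | hp | ⟨j, hp⟩ | ⟨j, hp⟩
    · exact absurd hadj12 ((h.hACa i0 _ hp _ hcend) ∘ SimpleGraph.Adj.symm)
    · exact absurd hp (hnD _)
    · rcases eq_or_ne j i0 with rfl | hij
      · exact hp
      · exact absurd hadj12 ((h.nadjBC hij hp hcend) ∘ SimpleGraph.Adj.symm)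
    · exact absurd hadj0 ((h.hACa j (f pa) hpa _ hp) ∘ SimpleGraph.Adj.symm)
  -- the two B-vertices are distinct members of the clique Bs i0, hence adjacent: contradiction
  have hppne : pa + ((1:ℕ) : ZMod k) ≠ pa + (((k-1) : ℕ) : ZMod k) := by
    intro hh
    exact hcastne 1 (k-1) (by omega) (by omega) (by omega) (add_left_cancel hh)
  have hadjB : G.Adj (f (pa + ((1:ℕ) : ZMod k))) (f (pa + (((k-1) : ℕ) : ZMod k))) :=
    h.hBcl i0 hb1 hb2 (fun he => hppne (f.injective he))
  rcases (hadj _ _).mp hadjB with hc | hc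
  · -- pa + 1 + 1 = pa + (k-1)
    rw [hup 1] at hc
    exact hcastne 2 (k-1) (by omega) (by omega) (by omega) (add_left_cancel hc)
  · -- pa + (k-1) + 1 = pa + 1
    rw [hwrap] at hc
    have : ((1:ℕ) : ZMod k) = 0 := by
      have : pa + ((1:ℕ) : ZMod k) = pa + 0 := by rw [add_zero]; exact hc.symm
      exact add_left_cancel this
    exact hne0 1 (by omega) (by omega) this

end LanternAux

namespace LanternAux

open Paper

variable {V : Type*} {G : SimpleGraph V} {r : ℕ} {A D : Set V} {Bs Cs : Fin r → Set V}

/-- No hole lies entirely inside one group `Bs i ∪ Cs i`. -/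
theorem hole_noAD (h : LP G r A D Bs Cs) {k : ℕ} (hk : 4 ≤ k) (f : ZMod k ↪ V)
    (hadj : ∀ p q : ZMod k, G.Adj (f p) (f q) ↔ (p + 1 = q ∨ q + 1 = p))
    (i : Fin r) (hb0 : f ((0 : ℕ) : ZMod k) ∈ Bs i)
    (hall : ∀ p : ZMod k, f p ∈ Bs i ∨ f p ∈ Cs i) : False := by
  haveI : NeZero k := ⟨by omega⟩
  have hcastne : ∀ a b : ℕ, a < k → b < k → a ≠ b → ((a : ZMod k) ≠ (b : ZMod k)) := by
    intro a b ha hb hab hh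
    have := congrArg ZMod.val hh
    rw [ZMod.val_cast_of_lt ha, ZMod.val_cast_of_lt hb] at this
    exact hab this
  have hcast1 : ∀ a : ℕ, ((a : ZMod k) + 1) = ((a + 1 : ℕ) : ZMod k) := by
    intro a; push_cast; ring
  have hnadj : ∀ a b : ℕ, a + 1 < k → b + 1 < k → a + 1 ≠ b → b + 1 ≠ a →
      ¬ G.Adj (f ((a : ℕ) : ZMod k)) (f ((b : ℕ) : ZMod k)) := by
    intro a b ha hb hab hba hadj'
    rcases (hadj _ _).mp hadj' with hc | hc
    · rw [hcast1] at hc; exact hcastne (a+1) b (by omega) (by omega) hab hc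
    · rw [hcast1] at hc; exact hcastne (b+1) a (by omega) (by omega) hba hc
  have hfne : ∀ a b : ℕ, a < k → b < k → a ≠ b →
      f ((a : ℕ) : ZMod k) ≠ f ((b : ℕ) : ZMod k) :=
    fun a b ha hb hab he => hcastne a b ha hb hab (f.injective he)
  have n02 : ¬ G.Adj (f ((0 : ℕ) : ZMod k)) (f ((2 : ℕ) : ZMod k)) :=
    hnadj 0 2 (by omega) (by omega) (by omega) (by omega)
  have h2C : f ((2 : ℕ) : ZMod k) ∈ Cs i := by
    rcases hall ((2 : ℕ) : ZMod k) with h2 | h2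
    · exact absurd (h.hBcl i hb0 h2 (hfne 0 2 (by omega) (by omega) (by omega))) n02
    · exact h2
  by_cases hi0 : i.val = 0
  · by_cases hk6 : 6 ≤ k
    · -- k ≥ 6 : three pairwise non-adjacent vertices in two cliques
      have n24 : ¬ G.Adj (f ((2 : ℕ) : ZMod k)) (f ((4 : ℕ) : ZMod k)) :=
        hnadj 2 4 (by omega) (by omega) (by omega) (by omega)
      have n04 : ¬ G.Adj (f ((0 : ℕ) : ZMod k)) (f ((4 : ℕ) : ZMod k)) :=
        hnadj 0 4 (by omega) (by omega) (by omega) (by omega)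
      rcases hall ((4 : ℕ) : ZMod k) with h4 | h4
      · exact absurd (h.hBcl i hb0 h4 (hfne 0 4 (by omega) (by omega) (by omega))) n04
      · exact absurd (h.hCcl i h2C h4 (hfne 2 4 (by omega) (by omega) (by omega))) n24
    · -- k = 4 or k = 5
      have hk45 : k = 4 ∨ k = 5 := by omega
      rcases hk45 with rfl | rfl
      · -- k = 4 : chain condition kills the square
        have n13 : ¬ G.Adj (f ((1 : ℕ) : ZMod 4)) (f ((3 : ℕ) : ZMod 4)) := by
          intro ha
          rcases (hadj _ _).mp ha with hc | hc <;> revert hc <;> decide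
        rcases hall ((1 : ℕ) : ZMod 4) with h1 | h1
        · -- f1 ∈ B, hence f3 ∈ C
          have h3 : f ((3 : ℕ) : ZMod 4) ∈ Cs i := by
            rcases hall ((3 : ℕ) : ZMod 4) with h3 | h3
            · exact absurd (h.hBcl i h1 h3 (hfne 1 3 (by omega) (by omega) (by omega))) n13
            · exact h3
          rcases h.hchainB i hi0 (f ((0 : ℕ) : ZMod 4)) hb0 (f ((1 : ℕ) : ZMod 4)) h1
            with hsub | hsub
          · have hmem : f ((3 : ℕ) : ZMod 4) ∈ nbrIn G (Cs i) (f ((0 : ℕ) : ZMod 4)) :=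
              ⟨h3, (hadj _ _).mpr (Or.inr (by decide))⟩
            exact n13 (hsub hmem).2
          · have hmem : f ((2 : ℕ) : ZMod 4) ∈ nbrIn G (Cs i) (f ((1 : ℕ) : ZMod 4)) :=
              ⟨h2C, (hadj _ _).mpr (Or.inl (by decide))⟩
            exact n02 (hsub hmem).2
        · -- f1 ∈ C, hence f3 ∈ B
          have h3 : f ((3 : ℕ) : ZMod 4) ∈ Bs i := by
            rcases hall ((3 : ℕ) : ZMod 4) with h3 | h3
            · exact h3
            · exact absurd (h.hCcl i h1 h3 (hfne 1 3 (by omega) (by omega) (by omega))) n13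
          rcases h.hchainB i hi0 (f ((0 : ℕ) : ZMod 4)) hb0 (f ((3 : ℕ) : ZMod 4)) h3
            with hsub | hsub
          · have hmem : f ((1 : ℕ) : ZMod 4) ∈ nbrIn G (Cs i) (f ((0 : ℕ) : ZMod 4)) :=
              ⟨h1, (hadj _ _).mpr (Or.inl (by decide))⟩
            exact n13 (hsub hmem).2.symm
          · have hmem : f ((2 : ℕ) : ZMod 4) ∈ nbrIn G (Cs i) (f ((3 : ℕ) : ZMod 4)) :=
              ⟨h2C, (hadj _ _).mpr (Or.inr (by decide))⟩
            exact n02 (hsub hmem).2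
      · -- k = 5 : parity argument
        have n24 : ¬ G.Adj (f ((2 : ℕ) : ZMod 5)) (f ((4 : ℕ) : ZMod 5)) := by
          intro ha; rcases (hadj _ _).mp ha with hc | hc <;> revert hc <;> decide
        have n14 : ¬ G.Adj (f ((1 : ℕ) : ZMod 5)) (f ((4 : ℕ) : ZMod 5)) := by
          intro ha; rcases (hadj _ _).mp ha with hc | hc <;> revert hc <;> decide
        have n03 : ¬ G.Adj (f ((0 : ℕ) : ZMod 5)) (f ((3 : ℕ) : ZMod 5)) := by
          intro ha; rcases (hadj _ _).mp ha with hc | hc <;> revert hc <;> decide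
        have n13 : ¬ G.Adj (f ((1 : ℕ) : ZMod 5)) (f ((3 : ℕ) : ZMod 5)) := by
          intro ha; rcases (hadj _ _).mp ha with hc | hc <;> revert hc <;> decide
        have h4B : f ((4 : ℕ) : ZMod 5) ∈ Bs i := by
          rcases hall ((4 : ℕ) : ZMod 5) with h4 | h4
          · exact h4
          · exact absurd (h.hCcl i h2C h4 (hfne 2 4 (by omega) (by omega) (by omega))) n24
        have h1C : f ((1 : ℕ) : ZMod 5) ∈ Cs i := by
          rcases hall ((1 : ℕ) : ZMod 5) with h1 | h1
          · exact absurd (h.hBcl i h1 h4B (hfne 1 4 (by omega) (by omega) (by omega))) n14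
          · exact h1
        rcases hall ((3 : ℕ) : ZMod 5) with h3 | h3
        · exact absurd (h.hBcl i hb0 h3 (hfne 0 3 (by omega) (by omega) (by omega))) n03
        · exact absurd (h.hCcl i h1C h3 (hfne 1 3 (by omega) (by omega) (by omega))) n13
  · -- i ≠ 0 : Bs i is complete to Cs i, so everything is a clique
    exact absurd (h.hcomp i hi0 _ hb0 _ h2C) n02

end LanternAux

namespace LanternAux

open Paper

variable {V : Type*} {G : SimpleGraph V} {r : ℕ} {A D : Set V} {Bs Cs : Fin r → Set V}

theorem hole_main (h : LP G r A D Bs Cs) {k : ℕ} (hk : 4 ≤ k) (f : ZMod k ↪ V)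
    (hadj : ∀ p q : ZMod k, G.Adj (f p) (f q) ↔ (p + 1 = q ∨ q + 1 = p)) : k = 6 := by
  haveI : NeZero k := ⟨by omega⟩
  by_cases hA : ∃ p, f p ∈ A
  · by_cases hD : ∃ p, f p ∈ D
    · -- both present : length is exactly 6
      obtain ⟨pa, hpa⟩ := hA
      obtain ⟨pd, hpd⟩ := hD
      have hADne : f pa ≠ f pd := fun he =>
        Set.disjoint_left.mp h.hAD hpa (by rw [he]; exact hpd)
      have e0 : pa ≠ pd := fun hh => hADne (by rw [hh])
      have enadj : ¬ G.Adj (f pa) (f pd) := h.hADa _ hpa _ hpd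
      have e1 : pa + 1 ≠ pd := fun hh => enadj ((hadj _ _).mpr (Or.inl hh))
      have e1' : pd + 1 ≠ pa := fun hh => enadj ((hadj _ _).mpr (Or.inr hh))
      have e2 : pa + 2 ≠ pd := by
        intro hh
        have ha1 : G.Adj (f pa) (f (pa + 1)) := (hadj _ _).mpr (Or.inl rfl)
        have ha2 : G.Adj (f (pa + 1)) (f pd) := (hadj _ _).mpr (Or.inl (by rw [← hh]; ring))
        rcases h.hU (f (pa + 1)) with hp | hp | ⟨j, hp⟩ | ⟨j, hp⟩
        · exact h.hADa _ hp _ hpd ha2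
        · exact h.hADa _ hpa _ hp ha1
        · exact h.hDBa j _ hpd _ hp ha2.symm
        · exact h.hACa j _ hpa _ hp ha1
      have e2' : pd + 2 ≠ pa := by
        intro hh
        have ha1 : G.Adj (f pd) (f (pd + 1)) := (hadj _ _).mpr (Or.inl rfl)
        have ha2 : G.Adj (f (pd + 1)) (f pa) := (hadj _ _).mpr (Or.inl (by rw [← hh]; ring))
        rcases h.hU (f (pd + 1)) with hp | hp | ⟨j, hp⟩ | ⟨j, hp⟩
        · exact h.hADa _ hp _ hpd ha1.symm
        · exact h.hADa _ hpa _ hp ha2.symm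
        · exact h.hDBa j _ hpd _ hp ha1
        · exact h.hACa j _ hpa _ hp ha2.symm
      -- every position lies in one of the two windows
      have hcov : ∀ p : ZMod k,
          p ∈ ({pa - 1, pa, pa + 1, pd - 1, pd, pd + 1} : Finset (ZMod k)) := by
        intro p
        simp only [Finset.mem_insert, Finset.mem_singleton]
        rcases h.hU (f p) with hp | hp | ⟨j, hp⟩ | ⟨j, hp⟩
        · by_cases hppa : p = pa
          · tauto
          · rcases (hadj p pa).mp (h.hAcl hp hpa (fun he => hppa (f.injective he)))
              with hc | hc
            · have : p = pa - 1 := by rw [← hc]; ring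
              tauto
            · have : p = pa + 1 := hc.symm
              tauto
        · by_cases hppd : p = pd
          · tauto
          · rcases (hadj p pd).mp (h.hDcl hp hpd (fun he => hppd (f.injective he)))
              with hc | hc
            · have : p = pd - 1 := by rw [← hc]; ring
              tauto
            · have : p = pd + 1 := hc.symm
              tauto
        · rcases (hadj pa p).mp (h.hABc j _ hpa _ hp) with hc | hc
          · have : p = pa + 1 := hc.symm
            tauto
          · have : p = pa - 1 := by rw [← hc]; ring
            tauto
        · rcases (hadj pd p).mp (h.hDCc j _ hpd _ hp) with hc | hc
          · have : p = pd + 1 := hc.symm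
            tauto
          · have : p = pd - 1 := by rw [← hc]; ring
            tauto
      have hk6 : k ≤ 6 := by
        have hsub : (Finset.univ : Finset (ZMod k)) ⊆
            ({pa - 1, pa, pa + 1, pd - 1, pd, pd + 1} : Finset (ZMod k)) :=
          fun x _ => hcov x
        have hcard := Finset.card_le_card hsub
        rw [Finset.card_univ, ZMod.card] at hcard
        have hS : ({pa - 1, pa, pa + 1, pd - 1, pd, pd + 1} : Finset (ZMod k)).card ≤ 6 := by
          refine le_trans (Finset.card_insert_le _ _) (Nat.succ_le_succ ?_)
          refine le_trans (Finset.card_insert_le _ _) (Nat.succ_le_succ ?_)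
          refine le_trans (Finset.card_insert_le _ _) (Nat.succ_le_succ ?_)
          refine le_trans (Finset.card_insert_le _ _) (Nat.succ_le_succ ?_)
          refine le_trans (Finset.card_insert_le _ _) (Nat.succ_le_succ ?_)
          simp
        omega
      -- k = 4 and k = 5 are impossible
      interval_cases k
      · exfalso
        have hdec : ∀ e : ZMod 4, e ≠ 0 → e ≠ 1 → e ≠ -1 → e ≠ 2 → e ≠ -2 → False := by decide
        exact hdec (pd - pa) (sub_ne_zero.mpr (Ne.symm e0))
          (fun hh => e1 (by linear_combination -hh))
          (fun hh => e1' (by linear_combination hh))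
          (fun hh => e2 (by linear_combination -hh))
          (fun hh => e2' (by linear_combination hh))
      · exfalso
        have hdec : ∀ e : ZMod 5, e ≠ 0 → e ≠ 1 → e ≠ -1 → e ≠ 2 → e ≠ -2 → False := by decide
        exact hdec (pd - pa) (sub_ne_zero.mpr (Ne.symm e0))
          (fun hh => e1 (by linear_combination -hh))
          (fun hh => e1' (by linear_combination hh))
          (fun hh => e2 (by linear_combination -hh))
          (fun hh => e2' (by linear_combination hh))
      · rfl
    · exact absurd (hole_auxA h hk f hadj hA.choose hA.choose_spec
        (by push_neg at hD; exact hD)) not_false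
  · by_cases hD : ∃ p, f p ∈ D
    · exact absurd (hole_auxA h.symm hk f hadj hD.choose hD.choose_spec
        (by push_neg at hA; exact hA)) not_false
    · -- neither A nor D
      exfalso
      push_neg at hA
      push_neg at hD
      obtain ⟨i, hi⟩ : ∃ i, f ((0 : ℕ) : ZMod k) ∈ Bs i ∨ f ((0 : ℕ) : ZMod k) ∈ Cs i := by
        rcases h.hU (f ((0 : ℕ) : ZMod k)) with hp | hp | ⟨i, hp⟩ | ⟨i, hp⟩
        · exact absurd hp (hA _)
        · exact absurd hp (hD _)
        · exact ⟨i, Or.inl hp⟩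
        · exact ⟨i, Or.inr hp⟩
      have hstep : ∀ p : ZMod k, (f p ∈ Bs i ∨ f p ∈ Cs i) →
          (f (p + 1) ∈ Bs i ∨ f (p + 1) ∈ Cs i) := by
        intro p hp
        have hpq' : G.Adj (f p) (f (p + 1)) := (hadj _ _).mpr (Or.inl rfl)
        rcases h.hU (f (p + 1)) with hq | hq | ⟨j, hq⟩ | ⟨j, hq⟩
        · exact absurd hq (hA _)
        · exact absurd hq (hD _)
        · rcases eq_or_ne i j with rfl | hij
          · exact Or.inl hq
          · exact absurd hpq' (h.hanti i j hij (f p) hp (f (p + 1)) (Or.inl hq))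
        · rcases eq_or_ne i j with rfl | hij
          · exact Or.inr hq
          · exact absurd hpq' (h.hanti i j hij (f p) hp (f (p + 1)) (Or.inr hq))
      have hallnat : ∀ t : ℕ, f ((t : ℕ) : ZMod k) ∈ Bs i ∨ f ((t : ℕ) : ZMod k) ∈ Cs i := by
        intro t
        induction t with
        | zero => exact hi
        | succ n ih =>
          have := hstep _ ih
          rwa [show ((n : ℕ) : ZMod k) + 1 = ((n + 1 : ℕ) : ZMod k) by push_cast; ring] at this
      have hall : ∀ p : ZMod k, f p ∈ Bs i ∨ f p ∈ Cs i := by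
        intro p
        have := hallnat p.val
        rwa [ZMod.natCast_rightInverse p] at this
      rcases hi with hi | hi
      · exact hole_noAD h hk f hadj i hi hall
      · exact hole_noAD h.symm hk f hadj i hi (fun p => (hall p).symm)

end LanternAux

namespace LanternAux

open Paper

variable {V : Type*} {G : SimpleGraph V} {r : ℕ} {A D : Set V} {Bs Cs : Fin r → Set V}

theorem conn (h : LP G r A D Bs Cs) (hr : 3 ≤ r) (Cq : Set V) (hclq : G.IsClique Cq)
    (hCD : ∀ d ∈ D, d ∉ Cq) : (G.induce (Set.univ \ Cq)).Connected := by
  have hmem : ∀ x : V, x ∉ Cq → x ∈ Set.univ \ Cq := fun x hx => ⟨trivial, hx⟩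
  obtain ⟨d0, hd0⟩ := h.hDne
  have hd0q : d0 ∉ Cq := hCD d0 hd0
  -- the clique meets at most one group `Bs i ∪ Cs i`
  obtain ⟨i0, hi0⟩ : ∃ i0 : Fin r, ∀ j, j ≠ i0 → ∀ x, (x ∈ Bs j ∪ Cs j) → x ∉ Cq := by
    by_cases hx : ∃ i, ∃ x ∈ Bs i ∪ Cs i, x ∈ Cq
    · obtain ⟨i, x, hxi, hxq⟩ := hx
      refine ⟨i, fun j hj y hy hyq => ?_⟩
      have hxy : x ≠ y := by
        rintro rfl
        rcases hxi with hxi | hxi <;> rcases hy with hy | hy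
        · exact Set.disjoint_left.mp (h.hBBd i j (Ne.symm hj)) hxi hy
        · exact Set.disjoint_left.mp (h.hBCd i j) hxi hy
        · exact Set.disjoint_left.mp (h.hBCd j i) hy hxi
        · exact Set.disjoint_left.mp (h.hCCd i j (Ne.symm hj)) hxi hy
      exact h.hanti i j (Ne.symm hj) x hxi y hy (hclq hxq hyq hxy)
    · push_neg at hx
      exact ⟨⟨0, by omega⟩, fun j _ x hxj hxq => hx j x hxj hxq⟩
  obtain ⟨j1, hj1⟩ : ∃ j : Fin r, j ≠ i0 := by
    rcases eq_or_ne i0 ⟨0, by omega⟩ with h0 | h0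
    · exact ⟨⟨1, by omega⟩, by rw [h0]; intro he; rw [Fin.mk.injEq] at he; omega⟩
    · exact ⟨⟨0, by omega⟩, Ne.symm h0⟩
  have hstep : ∀ (x y : V) (hx : x ∈ Set.univ \ Cq) (hy : y ∈ Set.univ \ Cq), G.Adj x y →
      (G.induce (Set.univ \ Cq)).Reachable ⟨x, hx⟩ ⟨y, hy⟩ :=
    fun x y hx hy ha => SimpleGraph.Adj.reachable ha
  have creach : ∀ (j : Fin r) (c : V) (hc : c ∈ Cs j) (hcq : c ∉ Cq),
      (G.induce (Set.univ \ Cq)).Reachable ⟨c, hmem c hcq⟩ ⟨d0, hmem d0 hd0q⟩ :=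
    fun j c hc hcq => hstep c d0 _ _ (h.hDCc j d0 hd0 c hc).symm
  have areach : ∀ (a : V) (ha : a ∈ A) (haq : a ∉ Cq),
      (G.induce (Set.univ \ Cq)).Reachable ⟨a, hmem a haq⟩ ⟨d0, hmem d0 hd0q⟩ := by
    intro a ha haq
    obtain ⟨b, hb⟩ := h.hBne j1
    have hbq : b ∉ Cq := hi0 j1 hj1 b (Or.inl hb)
    obtain ⟨c, hc, hbc⟩ := h.topCnbr j1 hb
    have hcq : c ∉ Cq := hi0 j1 hj1 c (Or.inr hc)
    exact ((hstep a b (hmem a haq) (hmem b hbq) (h.hABc j1 a ha b hb)).trans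
      (hstep b c _ (hmem c hcq) hbc)).trans (creach j1 c hc hcq)
  rw [connected_iff_exists_forall_reachable]
  refine ⟨⟨d0, hmem d0 hd0q⟩, ?_⟩
  rintro ⟨w, hw⟩
  have hwq : w ∉ Cq := hw.2
  apply SimpleGraph.Reachable.symm
  have hweq : (⟨w, hw⟩ : (Set.univ \ Cq : Set V)) = ⟨w, hmem w hwq⟩ := rfl
  rw [hweq]
  rcases h.hU w with hwA | hwD | ⟨j, hwB⟩ | ⟨j, hwC⟩
  · exact areach w hwA hwq
  · rcases eq_or_ne w d0 with rfl | hne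
    · exact SimpleGraph.Reachable.refl _
    · exact hstep w d0 _ _ (h.hDcl hwD hd0 hne)
  · by_cases hAq : ∃ a ∈ A, a ∉ Cq
    · obtain ⟨a, ha, haq⟩ := hAq
      exact (hstep w a _ (hmem a haq) (h.hABc j a ha w hwB).symm).trans (areach a ha haq)
    · push_neg at hAq
      have hCall : ∀ (j' : Fin r) (c : V), c ∈ Cs j' → c ∉ Cq := by
        intro j' c hc hcq
        obtain ⟨a0, ha0⟩ := h.hAne
        have hac : a0 ≠ c := fun he =>
          Set.disjoint_left.mp (h.hACd j') ha0 (by rw [he]; exact hc)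
        exact h.hACa j' a0 ha0 c hc (hclq (hAq a0 ha0) hcq hac)
      obtain ⟨c, hc, hbc⟩ := h.topCnbr j hwB
      exact (hstep w c _ (hmem c (hCall j c hc)) hbc).trans (creach j c hc (hCall j c hc))
  · exact creach j w hwC hwq

theorem no_cutset (h : LP G r A D Bs Cs) (hr : 3 ≤ r) : ¬ HasCliqueCutset G := by
  intro hcc
  obtain ⟨Cq, -, hCne, hclq, hnconn⟩ := hcc
  apply hnconn
  by_cases hD : ∀ d ∈ D, d ∉ Cq
  · exact conn h hr Cq hclq hD
  · push_neg at hD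
    obtain ⟨d, hd, hdq⟩ := hD
    have hA : ∀ a ∈ A, a ∉ Cq := by
      intro a ha haq
      have hne' : a ≠ d := fun he => Set.disjoint_left.mp h.hAD ha (by rw [he]; exact hd)
      exact h.hADa a ha d hd (hclq haq hdq hne')
    exact conn h.symm hr Cq hclq hA

end LanternAux


theorem statement_15 {V : Type*} [Fintype V] (R : SimpleGraph V)
    (h : IsLanternOn R Set.univ) :
    Paper.Free R (pathG 7) ∧
    (∀ k : ℕ, 4 ≤ k → ContainsInducedOn R Set.univ (cycG k) → k = 6) ∧
    ¬ HasCliqueCutset R := by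
  obtain ⟨r, hr, A, D, Bs, Cs, hp⟩ := h
  have hL := LanternAux.toLP hp
  refine ⟨?_, ?_, LanternAux.no_cutset hL hr⟩
  · rintro ⟨f, -, hf⟩
    apply LanternAux.p7_main hL f
    intro p q
    rw [hf p q]
    simp only [pathG, SimpleGraph.fromRel_adj]
    constructor
    · rintro ⟨-, hx⟩; exact hx
    · intro hx
      exact ⟨by rintro rfl; omega, hx⟩
  · intro k hk hcon
    obtain ⟨f, -, hf⟩ := hcon
    apply LanternAux.hole_main hL hk f
    intro p q
    rw [hf p q]
    simp only [cycG, SimpleGraph.fromRel_adj]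
    constructor
    · rintro ⟨-, hx⟩; exact hx
    · intro hx
      refine ⟨?_, hx⟩
      rintro rfl
      have h1 : ((1 : ℕ) : ZMod k) = 0 := by
        push_cast
        rcases hx with hx | hx <;> rwa [add_eq_left] at hx
      have hdvd := (ZMod.natCast_eq_zero_iff 1 k).mp h1
      have := Nat.le_of_dvd one_pos hdvd
      omega
end
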